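/- arXiv:1309.1619 — 7 statements merged into one kernel-verified Lean document; each statement's English description precedes it below -/
import Mathlib

section
/- Let μ be a Radon measure on ℝ and x ∈ supp μ, and suppose condition (TC) is satisfied at x. Then P({(1−β)δ_{−1} + β·δ_1 : 0 ≤ β ≤ 1}) = 0 for every distribution P in the ω-limit set of T ↦ ⟨μ⟩_{x,T}. -/
open MeasureTheory Filter Topology Set
open scoped ENNReal NNReal

noncomputable section

/-- `I = [-1,1]`. -/
abbrev I01 : Set ℝ := Set.Icc (-1 : ℝ) 1

/-- The window `x + γ·I_t = [x - γe^{-t}, x + γe^{-t}]`. -/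
def window (x γ t : ℝ) : Set ℝ := Set.Icc (x - γ * Real.exp (-t)) (x + γ * Real.exp (-t))

/-- The scenery `μ_{x,t}` as a measure on `I = [-1,1]`:
`A ↦ μ(x + e^{-t}A) / μ(x + I_t)`. -/
def sceneryMeasure (μ : Measure ℝ) (x t : ℝ) : Measure I01 :=
  (μ (window x 1 t))⁻¹ • Measure.comap (fun a : I01 => x + Real.exp (-t) * (a : ℝ)) μ

/-- The scenery `μ_{x,t}` as a Borel probability measure on `I = [-1,1]`
(with an irrelevant junk value if the normalisation fails, which does not
happen when `μ` is Radon and `x ∈ supp μ`, `t ≥ 0`). -/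
def scenery (μ : Measure ℝ) (x t : ℝ) : ProbabilityMeasure I01 := by
  classical
  exact if h : IsProbabilityMeasure (sceneryMeasure μ x t) then ⟨_, h⟩
  else ⟨Measure.dirac ⟨0, by norm_num⟩, inferInstance⟩

/-- `x` belongs to the topological support of `μ`. -/
def MemSupp (μ : Measure ℝ) (x : ℝ) : Prop := ∀ ε > 0, 0 < μ (Set.Ioo (x - ε) (x + ε))

/-- `f` is an orientation-preserving `C¹` diffeomorphism of `ℝ`. -/
def IsOPDiffeo (f : ℝ → ℝ) : Prop :=
  ContDiff ℝ 1 f ∧ Function.Bijective f ∧ ∀ y : ℝ, 0 < deriv f y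

/-- The families of distributions `⟨μ⟩_{x,T}` and `⟨ν⟩_{y,T}` are asymptotic:
`⟨μ⟩_{x,T} - ⟨ν⟩_{y,T} → 0` weak-*, i.e. for every continuous `g : M^□ → ℝ`,
`(1/T) ∫_0^T (g(μ_{x,t}) - g(ν_{y,t})) dt → 0` as `T → ∞`. -/
def DistAsymptotic (μ : Measure ℝ) (x : ℝ) (ν : Measure ℝ) (y : ℝ) : Prop :=
  ∀ g : C(ProbabilityMeasure I01, ℝ),
    Tendsto (fun T : ℝ => (1 / T) * ∫ t in Set.Ioc (0 : ℝ) T,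
      (g (scenery μ x t) - g (scenery ν y t))) atTop (𝓝 0)

/-- Condition (TC) at `x`:
`lim_{K→∞} limsup_{γ→1⁺} limsup_{T→∞} (1/T)·λ({t ∈ [0,T] : μ(x+γI_t)/μ(x+I_t) ≥ K}) = 0`. -/
def CondTC (μ : Measure ℝ) (x : ℝ) : Prop :=
  Tendsto (fun K : ℝ =>
      limsup (fun γ : ℝ =>
          limsup (fun T : ℝ =>
              (1 / T) * (volume {t : ℝ | t ∈ Set.Icc (0 : ℝ) T ∧
                ENNReal.ofReal K ≤ μ (window x γ t) / μ (window x 1 t)}).toReal)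
            atTop)
        (𝓝[>] (1 : ℝ)))
    atTop (𝓝 0)

/-- Borel σ-algebra on the space `M^□` of probability measures on `[-1,1]`
with the weak-* topology. -/
instance : MeasurableSpace (ProbabilityMeasure I01) := borel _

instance : BorelSpace (ProbabilityMeasure I01) := ⟨rfl⟩

/-- The measure `(1-β)·δ_{-1} + β·δ_1` on `[-1,1]`. -/
def bdryCombo (β : ℝ) : Measure I01 :=
  ENNReal.ofReal (1 - β) • Measure.dirac (⟨-1, by norm_num⟩ : I01) +
    ENNReal.ofReal β • Measure.dirac (⟨1, by norm_num⟩ : I01)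

/-- `P` is an ω-limit point of `T ↦ ⟨μ⟩_{x,T}`: there is a sequence `T_k → ∞` with
`⟨μ⟩_{x,T_k} → P` weak-*, i.e. for every continuous `g : M^□ → ℝ`,
`(1/T_k) ∫_0^{T_k} g(μ_{x,t}) dt → ∫ g dP`. -/
def IsOmegaLimitDist (μ : Measure ℝ) (x : ℝ) (P : Measure (ProbabilityMeasure I01)) : Prop :=
  ∃ Tk : ℕ → ℝ, Tendsto Tk atTop atTop ∧
    ∀ g : C(ProbabilityMeasure I01, ℝ),
      Tendsto (fun k => (1 / Tk k) * ∫ t in Set.Ioc (0 : ℝ) (Tk k), g (scenery μ x t)) atTop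
        (𝓝 (∫ ν, g ν ∂P))

/-- `μ` generates the distribution `P` at `x`: `⟨μ⟩_{x,T} → P` weak-* as `T → ∞`. -/
def Generates (μ : Measure ℝ) (x : ℝ) (P : Measure (ProbabilityMeasure I01)) : Prop :=
  ∀ g : C(ProbabilityMeasure I01, ℝ),
    Tendsto (fun T : ℝ => (1 / T) * ∫ t in Set.Ioc (0 : ℝ) T, g (scenery μ x t)) atTop
      (𝓝 (∫ ν, g ν ∂P))

-- REST: to be appended after original defs
namespace OmegaTC

instance : CompactSpace I01 := isCompact_iff_compactSpace.mp isCompact_Icc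

lemma measurableEmbedding_aff (x c : ℝ) (hc : c ≠ 0) :
    MeasurableEmbedding (fun a : I01 => x + c * (a : ℝ)) := by
  have hcont : Continuous (fun a : I01 => x + c * (a : ℝ)) :=
    continuous_const.add (continuous_const.mul continuous_subtype_val)
  have hinj : Function.Injective (fun a : I01 => x + c * (a : ℝ)) := by
    intro a b hab
    simp only [add_right_inj] at hab
    exact Subtype.ext (mul_left_cancel₀ hc hab)
  exact (hcont.isClosedEmbedding hinj).measurableEmbedding

lemma image_aff_Icc (x c l u : ℝ) (hc : 0 < c) :
    (fun a : ℝ => x + c * a) '' Set.Icc l u = Set.Icc (x + c * l) (x + c * u) := by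
  ext y
  simp only [Set.mem_image, Set.mem_Icc]
  constructor
  · rintro ⟨a, ⟨h1, h2⟩, rfl⟩
    constructor <;> nlinarith
  · rintro ⟨h1, h2⟩
    refine ⟨(y - x) / c, ⟨?_, ?_⟩, by field_simp; ring⟩
    · rw [le_div_iff₀ hc]; nlinarith
    · rw [div_le_iff₀ hc]; nlinarith

lemma image_aff_subtype (x c l u : ℝ) (hc : 0 < c) (hsub : Set.Icc l u ⊆ I01) :
    (fun a : I01 => x + c * (a : ℝ)) '' (Subtype.val ⁻¹' Set.Icc l u)
      = Set.Icc (x + c * l) (x + c * u) := by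
  have h1 : (fun a : I01 => x + c * (a : ℝ))
      = (fun a : ℝ => x + c * a) ∘ (Subtype.val : I01 → ℝ) := rfl
  rw [h1, Set.image_comp, Subtype.image_preimage_val,
    Set.inter_eq_self_of_subset_right hsub, image_aff_Icc x c l u hc]

variable {μ : Measure ℝ} [IsLocallyFiniteMeasure μ] {x : ℝ}

lemma w_pos (hx : MemSupp μ x) (t : ℝ) : 0 < μ (window x 1 t) := by
  refine lt_of_lt_of_le (hx (Real.exp (-t)) (Real.exp_pos _)) (measure_mono ?_)
  rw [window, one_mul]
  exact Set.Ioo_subset_Icc_self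

lemma w_ne_top (t : ℝ) : μ (window x 1 t) ≠ ∞ :=
  (IsCompact.measure_lt_top isCompact_Icc).ne

lemma sceneryMeasure_apply (μ : Measure ℝ) (x t : ℝ) (A : Set I01) :
    sceneryMeasure μ x t A
      = (μ (window x 1 t))⁻¹ * μ ((fun a : I01 => x + Real.exp (-t) * (a : ℝ)) '' A) := by
  rw [sceneryMeasure, Measure.smul_apply,
    (measurableEmbedding_aff x (Real.exp (-t)) (Real.exp_ne_zero _)).comap_apply, smul_eq_mul]

lemma scenery_isProb (hx : MemSupp μ x) (t : ℝ) :
    IsProbabilityMeasure (sceneryMeasure μ x t) := by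
  constructor
  rw [sceneryMeasure_apply]
  have himg : (fun a : I01 => x + Real.exp (-t) * (a : ℝ)) '' Set.univ = window x 1 t := by
    have h2 : (Set.univ : Set I01) = Subtype.val ⁻¹' Set.Icc (-1 : ℝ) 1 := by
      ext a; simp [a.2]
    rw [h2, image_aff_subtype x _ _ _ (Real.exp_pos _) subset_rfl, window]
    congr 1 <;> ring
  rw [himg, ENNReal.inv_mul_cancel (w_pos hx t).ne' (w_ne_top t)]

lemma scenery_coe (hx : MemSupp μ x) (t : ℝ) :
    (scenery μ x t : Measure I01) = sceneryMeasure μ x t := by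
  unfold scenery
  classical
  change Subtype.val (dite _ (fun h => (⟨sceneryMeasure μ x t, h⟩ : {m : Measure I01 // IsProbabilityMeasure m})) _) = _
  rw [dif_pos (scenery_isProb hx t)]

/-- The middle set `[-(1-ε), 1-ε]` inside `I01`. -/
def midSet (ε : ℝ) : Set I01 := Subtype.val ⁻¹' Set.Icc (-(1 - ε)) (1 - ε)

lemma scenery_middle (hx : MemSupp μ x) (t : ℝ) {ε : ℝ} (hε : 0 < ε) (hε1 : ε < 1) :
    (scenery μ x t : Measure I01) (midSet ε)
      = μ (window x (1 - ε) t) / μ (window x 1 t) := by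
  rw [scenery_coe hx, sceneryMeasure_apply, midSet,
    image_aff_subtype x _ _ _ (Real.exp_pos _)
      (by intro y hy; simp only [Set.mem_Icc] at *; constructor <;> linarith [hy.1, hy.2])]
  rw [ENNReal.div_eq_inv_mul]
  congr 2
  rw [window]
  congr 1 <;> ring

/-- Tent-like test function: 1 on the middle `[-(1-ε),1-ε]`, 0 at `±1`. -/
def phiC (ε : ℝ) : C(I01, ℝ≥0) :=
  ⟨fun a => Real.toNNReal (min 1 ((1 - |(a : ℝ)|) / ε)),
    continuous_real_toNNReal.comp (continuous_const.min
      ((continuous_const.sub (continuous_abs.comp continuous_subtype_val)).div_const ε))⟩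

def phiB (ε : ℝ) : BoundedContinuousFunction I01 ℝ≥0 :=
  BoundedContinuousFunction.mkOfCompact (phiC ε)

lemma phiB_eq_one {ε : ℝ} (hε : 0 < ε) (a : I01) (ha : |(a : ℝ)| ≤ 1 - ε) : phiB ε a = 1 := by
  simp only [phiB, BoundedContinuousFunction.mkOfCompact_apply, phiC, ContinuousMap.coe_mk]
  rw [min_eq_left, Real.toNNReal_one]
  rw [le_div_iff₀ hε]
  linarith

lemma phiB_boundary {ε : ℝ} (a : I01) (ha : |(a : ℝ)| = 1) : phiB ε a = 0 := by
  simp only [phiB, BoundedContinuousFunction.mkOfCompact_apply, phiC, ContinuousMap.coe_mk, ha]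
  norm_num

/-- Integration of `phiB ε` against a probability measure, as an `ℝ≥0`-valued function. -/
def GG (ε : ℝ) (ν : ProbabilityMeasure I01) : ℝ≥0 := ν.toFiniteMeasure.testAgainstNN (phiB ε)

lemma GG_continuous (ε : ℝ) : Continuous (GG ε) :=
  ProbabilityMeasure.continuous_testAgainstNN_eval (phiB ε)

lemma GG_coe (ε : ℝ) (ν : ProbabilityMeasure I01) :
    (GG ε ν : ℝ≥0∞) = ∫⁻ a, (phiB ε a : ℝ≥0∞) ∂(ν : Measure I01) := by
  rw [GG, FiniteMeasure.testAgainstNN_coe_eq]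
  rfl

lemma measure_midSet_le_GG {ε : ℝ} (hε : 0 < ε) (ν : ProbabilityMeasure I01) :
    (ν : Measure I01) (midSet ε) ≤ (GG ε ν : ℝ≥0∞) := by
  rw [midSet, GG_coe, ← lintegral_indicator_one (measurable_subtype_coe measurableSet_Icc :
    MeasurableSet (Subtype.val ⁻¹' Set.Icc (-(1 - ε)) (1 - ε)))]
  refine lintegral_mono fun a => ?_
  by_cases ha : a ∈ (Subtype.val ⁻¹' Set.Icc (-(1 - ε)) (1 - ε) : Set I01)
  · rw [Set.indicator_of_mem ha]
    have h1 : |(a : ℝ)| ≤ 1 - ε := by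
      rw [abs_le]
      exact ⟨(Set.mem_Icc.mp ha).1, (Set.mem_Icc.mp ha).2⟩
    rw [phiB_eq_one hε a h1]
    simp
  · rw [Set.indicator_of_notMem ha]
    exact zero_le

/-- The continuous test function on distributions. -/
def psiC (ε : ℝ) : C(ProbabilityMeasure I01, ℝ) :=
  ⟨fun ν => max 0 (min 1 (2 - 2 * (GG ε ν : ℝ) / ε)),
    continuous_const.max (continuous_const.min (continuous_const.sub
      ((continuous_const.mul (NNReal.continuous_coe.comp (GG_continuous ε))).div_const ε)))⟩

lemma psiC_nonneg (ε : ℝ) (ν : ProbabilityMeasure I01) : 0 ≤ psiC ε ν := le_max_left _ _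

lemma psiC_le_one (ε : ℝ) (ν : ProbabilityMeasure I01) : psiC ε ν ≤ 1 := by
  simp only [psiC, ContinuousMap.coe_mk]
  exact max_le (by norm_num) (min_le_left _ _)

lemma psiC_eq_zero {ε : ℝ} (hε : 0 < ε) {ν : ProbabilityMeasure I01}
    (h : ε ≤ (GG ε ν : ℝ)) : psiC ε ν ≤ 0 := by
  simp only [psiC, ContinuousMap.coe_mk]
  apply max_le le_rfl
  refine le_trans (min_le_right _ _) ?_
  rw [sub_nonpos, le_div_iff₀ hε]
  nlinarith

lemma psiC_eq_one_of_GG_zero {ε : ℝ} {ν : ProbabilityMeasure I01}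
    (h : GG ε ν = 0) : psiC ε ν = 1 := by
  simp only [psiC, ContinuousMap.coe_mk, h]
  norm_num

/-- The key geometric estimate: if the scenery at time `t` gives little mass to the middle,
then at time `t - log(1-ε)` the `(1-ε)⁻¹`-window has much more mass than the `1`-window. -/
lemma ratio_large (hx : MemSupp μ x) {ε : ℝ} (hε : 0 < ε) (hε1 : ε < 1) {t : ℝ}
    (h : ((GG ε (scenery μ x t)) : ℝ) < ε) :
    ENNReal.ofReal (1 / ε) ≤
      μ (window x (1 - ε)⁻¹ (t + (-Real.log (1 - ε)))) /
        μ (window x 1 (t + (-Real.log (1 - ε)))) := by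
  have h1ε : (0 : ℝ) < 1 - ε := by linarith
  have hexp : Real.exp (-(t + (-Real.log (1 - ε)))) = Real.exp (-t) * (1 - ε) := by
    rw [neg_add, neg_neg, Real.exp_add, Real.exp_log h1ε]
  have hw1 : window x (1 - ε)⁻¹ (t + (-Real.log (1 - ε))) = window x 1 t := by
    rw [window, window, hexp]
    congr 1 <;> (field_simp; try ring)
  have hw2 : window x 1 (t + (-Real.log (1 - ε))) = window x (1 - ε) t := by
    rw [window, window, hexp]
    congr 1 <;> ring
  rw [hw1, hw2]
  have hwpos := w_pos hx t
  have hwtop := w_ne_top (μ := μ) (x := x) t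
  have hslt : μ (window x (1 - ε) t) < ENNReal.ofReal ε * μ (window x 1 t) := by
    have h2 : μ (window x (1 - ε) t) / μ (window x 1 t) ≤ (GG ε (scenery μ x t) : ℝ≥0∞) := by
      rw [← scenery_middle hx t hε hε1]
      exact measure_midSet_le_GG hε _
    have h3 : (GG ε (scenery μ x t) : ℝ≥0∞) < ENNReal.ofReal ε := by
      rw [ENNReal.ofReal, ENNReal.coe_lt_coe]
      exact Real.lt_toNNReal_iff_coe_lt.mpr h
    have h4 := lt_of_le_of_lt h2 h3
    rwa [ENNReal.div_lt_iff (Or.inl hwpos.ne') (Or.inl hwtop)] at h4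
  rcases eq_or_ne (μ (window x (1 - ε) t)) 0 with h0 | h0
  · rw [h0, ENNReal.div_zero hwpos.ne']
    exact le_top
  · have hstop : μ (window x (1 - ε) t) ≠ ∞ := (IsCompact.measure_lt_top isCompact_Icc).ne
    rw [ENNReal.le_div_iff_mul_le (Or.inl h0) (Or.inl hstop)]
    calc ENNReal.ofReal (1 / ε) * μ (window x (1 - ε) t)
        ≤ ENNReal.ofReal (1 / ε) * (ENNReal.ofReal ε * μ (window x 1 t)) :=
          mul_le_mul_right hslt.le _
      _ = μ (window x 1 t) := by
          rw [← mul_assoc, ← ENNReal.ofReal_mul (by positivity), one_div,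
            inv_mul_cancel₀ hε.ne', ENNReal.ofReal_one, one_mul]

lemma GG_bdryCombo {ε : ℝ} {ν : ProbabilityMeasure I01} {β : ℝ}
    (hν : (ν : Measure I01) = bdryCombo β) : GG ε ν = 0 := by
  have h : (GG ε ν : ℝ≥0∞) = 0 := by
    rw [GG_coe, hν, bdryCombo, lintegral_add_measure, lintegral_smul_measure,
      lintegral_smul_measure, lintegral_dirac, lintegral_dirac,
      phiB_boundary _ (by norm_num), phiB_boundary _ (by norm_num)]
    simp
  exact_mod_cast h

lemma measure_bdry_le_integral {ε : ℝ} (P : Measure (ProbabilityMeasure I01))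
    [IsProbabilityMeasure P] :
    (P {ν : ProbabilityMeasure I01 |
        ∃ β ∈ Set.Icc (0 : ℝ) 1, (ν : Measure I01) = bdryCombo β}).toReal
      ≤ ∫ ν, psiC ε ν ∂P := by
  set S : Set (ProbabilityMeasure I01) := (psiC ε) ⁻¹' (Set.Ici 1) with hSdef
  have hS : MeasurableSet S := ((psiC ε).continuous.measurable) measurableSet_Ici
  have hBS : {ν : ProbabilityMeasure I01 |
      ∃ β ∈ Set.Icc (0 : ℝ) 1, (ν : Measure I01) = bdryCombo β} ⊆ S := by
    rintro ν ⟨β, _, hν⟩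
    have : psiC ε ν = 1 := psiC_eq_one_of_GG_zero (GG_bdryCombo hν)
    simp only [hSdef, Set.mem_preimage, Set.mem_Ici, this, le_refl]
  have hpsi_int : Integrable (fun ν => psiC ε ν) P := by
    refine Integrable.mono' (integrable_const (1 : ℝ))
      ((psiC ε).continuous.aestronglyMeasurable) (ae_of_all _ fun ν => ?_)
    rw [Real.norm_eq_abs, abs_le]
    exact ⟨by linarith [psiC_nonneg ε ν], psiC_le_one ε ν⟩
  have hind_int : Integrable (S.indicator fun _ => (1 : ℝ)) P :=
    (integrable_const (1 : ℝ)).indicator hS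
  have hmono : ∀ ν, S.indicator (fun _ => (1 : ℝ)) ν ≤ psiC ε ν := by
    intro ν
    by_cases hν : ν ∈ S
    · rw [Set.indicator_of_mem hν]
      exact hν
    · rw [Set.indicator_of_notMem hν]
      exact psiC_nonneg ε ν
  calc (P {ν : ProbabilityMeasure I01 |
        ∃ β ∈ Set.Icc (0 : ℝ) 1, (ν : Measure I01) = bdryCombo β}).toReal
      ≤ (P S).toReal := ENNReal.toReal_mono (measure_ne_top P S) (measure_mono hBS)
    _ = ∫ ν, S.indicator (fun _ => (1 : ℝ)) ν ∂P := (integral_indicator_one hS).symm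
    _ ≤ ∫ ν, psiC ε ν ∂P := integral_mono hind_int hpsi_int hmono

lemma F_eventually_bound (γ K : ℝ) : ∀ᶠ T in (atTop : Filter ℝ),
    (1 / T) * (volume {t : ℝ | t ∈ Set.Icc (0 : ℝ) T ∧
      ENNReal.ofReal K ≤ μ (window x γ t) / μ (window x 1 t)}).toReal ∈ Set.Icc (0 : ℝ) 1 := by
  filter_upwards [eventually_ge_atTop (1 : ℝ)] with T hT
  have hTpos : 0 < T := lt_of_lt_of_le one_pos hT
  constructor
  · positivity
  · have hle : volume {t : ℝ | t ∈ Set.Icc (0 : ℝ) T ∧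
        ENNReal.ofReal K ≤ μ (window x γ t) / μ (window x 1 t)} ≤ ENNReal.ofReal T := by
      refine le_trans (measure_mono fun t ht => ht.1) ?_
      rw [Real.volume_Icc, sub_zero]
    have h2 : (volume {t : ℝ | t ∈ Set.Icc (0 : ℝ) T ∧
        ENNReal.ofReal K ≤ μ (window x γ t) / μ (window x 1 t)}).toReal ≤ T := by
      refine le_trans (ENNReal.toReal_mono ENNReal.ofReal_ne_top hle) ?_
      rw [ENNReal.toReal_ofReal hTpos.le]
    calc (1 / T) * (volume {t : ℝ | t ∈ Set.Icc (0 : ℝ) T ∧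
          ENNReal.ofReal K ≤ μ (window x γ t) / μ (window x 1 t)}).toReal
        ≤ (1 / T) * T := by
          exact mul_le_mul_of_nonneg_left h2 (by positivity)
      _ = 1 := by field_simp

lemma F_limsup_le_one (γ K : ℝ) :
    limsup (fun T : ℝ => (1 / T) * (volume {t : ℝ | t ∈ Set.Icc (0 : ℝ) T ∧
      ENNReal.ofReal K ≤ μ (window x γ t) / μ (window x 1 t)}).toReal) atTop ≤ 1 :=
  limsup_le_of_le
    (isCoboundedUnder_le_of_eventually_le _
      ((F_eventually_bound (μ := μ) (x := x) γ K).mono fun _ h => h.1))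
    ((F_eventually_bound (μ := μ) (x := x) γ K).mono fun _ h => h.2)

lemma key_limsup (hx : MemSupp μ x) {P : Measure (ProbabilityMeasure I01)}
    [IsProbabilityMeasure P] (hom : IsOmegaLimitDist μ x P)
    {p : ℝ} (hp : 0 < p)
    (hPB : p ≤ (P {ν : ProbabilityMeasure I01 |
        ∃ β ∈ Set.Icc (0 : ℝ) 1, (ν : Measure I01) = bdryCombo β}).toReal)
    {ε K : ℝ} (hε : 0 < ε) (hε1 : ε < 1) (hK : K ≤ 1 / ε) :
    p / 3 ≤ limsup (fun T : ℝ =>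
      (1 / T) * (volume {t : ℝ | t ∈ Set.Icc (0 : ℝ) T ∧
        ENNReal.ofReal K ≤ μ (window x ((1 - ε)⁻¹) t) / μ (window x 1 t)}).toReal) atTop := by
  obtain ⟨Tk, hTk, hconv⟩ := hom
  have hint : p ≤ ∫ ν, psiC ε ν ∂P := le_trans hPB (measure_bdry_le_integral P)
  have hev1 : ∀ᶠ k in atTop,
      p / 2 < (1 / Tk k) * ∫ t in Set.Ioc (0 : ℝ) (Tk k), psiC ε (scenery μ x t) :=
    (hconv (psiC ε)).eventually (eventually_gt_nhds (by linarith))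
  set c : ℝ := -Real.log (1 - ε) with hc
  have h1ε : (0 : ℝ) < 1 - ε := by linarith
  have hcpos : 0 < c := by
    rw [hc, neg_pos]
    exact Real.log_neg h1ε (by linarith)
  -- the key estimate, for suitable k
  have hkey : ∀ k, 1 ≤ Tk k → 2 * c ≤ Tk k →
      p / 2 < (1 / Tk k) * ∫ t in Set.Ioc (0 : ℝ) (Tk k), psiC ε (scenery μ x t) →
      p / 3 ≤ (1 / (Tk k + c)) * (volume {t : ℝ | t ∈ Set.Icc (0 : ℝ) (Tk k + c) ∧
        ENNReal.ofReal K ≤ μ (window x ((1 - ε)⁻¹) t) / μ (window x 1 t)}).toReal := by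
    intro k hT1 hT2c hI0
    set T := Tk k with hT
    have hTpos : (0 : ℝ) < T := lt_of_lt_of_le one_pos hT1
    set bad : Set ℝ := {t : ℝ | t ∈ Set.Icc (0 : ℝ) (T + c) ∧
        ENNReal.ofReal K ≤ μ (window x ((1 - ε)⁻¹) t) / μ (window x 1 t)} with hbad
    have hI : (p / 2) * T ≤ ∫ t in Set.Ioc (0 : ℝ) T, psiC ε (scenery μ x t) := by
      have h5 : T * (p / 2) < T * ((1 / T) * ∫ t in Set.Ioc (0 : ℝ) T, psiC ε (scenery μ x t)) :=
        mul_lt_mul_of_pos_left hI0 hTpos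
      have h6 : T * ((1 / T) * ∫ t in Set.Ioc (0 : ℝ) T, psiC ε (scenery μ x t))
          = ∫ t in Set.Ioc (0 : ℝ) T, psiC ε (scenery μ x t) := by
        field_simp
      rw [h6] at h5
      linarith
    have hle1 : ENNReal.ofReal (∫ t in Set.Ioc (0 : ℝ) T, psiC ε (scenery μ x t))
        ≤ (volume.restrict (Set.Ioc (0 : ℝ) T))
            {t : ℝ | ((GG ε (scenery μ x t)) : ℝ) < ε} := by
      refine integral_le_measure (fun t _ => psiC_le_one ε _) (fun t ht => ?_)
      exact psiC_eq_zero hε (not_lt.1 ht)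
    rw [Measure.restrict_apply' measurableSet_Ioc] at hle1
    have hsub : {t : ℝ | ((GG ε (scenery μ x t)) : ℝ) < ε} ∩ Set.Ioc (0 : ℝ) T
        ⊆ (fun u => c + u) ⁻¹' bad := by
      rintro t ⟨hG, ht⟩
      have hratio := ratio_large hx hε hε1 hG
      refine Set.mem_preimage.mpr ?_
      simp only [hbad, Set.mem_setOf_eq, Set.mem_Icc]
      refine ⟨⟨by linarith [ht.1, hcpos.le], by linarith [ht.2]⟩, ?_⟩
      rw [add_comm c t]
      exact le_trans (ENNReal.ofReal_le_ofReal hK) hratio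
    have hle3 : volume ({t : ℝ | ((GG ε (scenery μ x t)) : ℝ) < ε} ∩ Set.Ioc (0 : ℝ) T)
        ≤ volume bad := by
      calc volume ({t : ℝ | ((GG ε (scenery μ x t)) : ℝ) < ε} ∩ Set.Ioc (0 : ℝ) T)
          ≤ volume ((fun u => c + u) ⁻¹' bad) := measure_mono hsub
        _ = volume bad := measure_preimage_add volume c bad
    have hfin : volume bad ≠ ∞ := by
      refine ne_top_of_le_ne_top ?_ (measure_mono (fun t ht => ht.1))
      rw [Real.volume_Icc]
      exact ENNReal.ofReal_ne_top
    have hmain : (p / 2) * T ≤ (volume bad).toReal := by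
      have h4 : ENNReal.ofReal ((p / 2) * T) ≤ volume bad :=
        le_trans (ENNReal.ofReal_le_ofReal hI) (le_trans hle1 hle3)
      calc (p / 2) * T = (ENNReal.ofReal ((p / 2) * T)).toReal :=
            (ENNReal.toReal_ofReal (by positivity)).symm
        _ ≤ (volume bad).toReal := ENNReal.toReal_mono hfin h4
    have hTc : (0 : ℝ) < T + c := by linarith
    have hstep : p / 3 * (T + c) ≤ (volume bad).toReal := by
      nlinarith
    have h9 : 1 / (T + c) * (volume bad).toReal = (volume bad).toReal / (T + c) := by ring
    rw [h9, le_div_iff₀ hTc]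
    linarith [hstep]
  -- frequently the bound holds
  have hfreq : ∃ᶠ T in (atTop : Filter ℝ), p / 3 ≤ (fun T : ℝ =>
      (1 / T) * (volume {t : ℝ | t ∈ Set.Icc (0 : ℝ) T ∧
        ENNReal.ofReal K ≤ μ (window x ((1 - ε)⁻¹) t) / μ (window x 1 t)}).toReal) T := by
    rw [frequently_atTop]
    intro M
    have hev : ∀ᶠ k in atTop, (1 ≤ Tk k ∧ 2 * c ≤ Tk k ∧ M ≤ Tk k) ∧
        p / 2 < (1 / Tk k) * ∫ t in Set.Ioc (0 : ℝ) (Tk k), psiC ε (scenery μ x t) := by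
      refine Eventually.and ?_ hev1
      have h7 := hTk.eventually_ge_atTop (max 1 (max (2 * c) M))
      refine h7.mono fun k hk => ⟨le_trans (le_max_left _ _) hk,
        le_trans (le_trans (le_max_left _ _) (le_max_right _ _)) hk,
        le_trans (le_trans (le_max_right _ _) (le_max_right _ _)) hk⟩
    obtain ⟨k, ⟨h1, h2, h3⟩, h4⟩ := hev.exists
    exact ⟨Tk k + c, by linarith, hkey k h1 h2 h4⟩
  refine le_limsup_of_frequently_le hfreq ?_
  exact ⟨1, by
    rw [eventually_map]
    exact (F_eventually_bound (μ := μ) (x := x) ((1 - ε)⁻¹) K).mono fun T h => h.2⟩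

lemma key_outer (hx : MemSupp μ x) {P : Measure (ProbabilityMeasure I01)}
    [IsProbabilityMeasure P] (hom : IsOmegaLimitDist μ x P)
    {p : ℝ} (hp : 0 < p)
    (hPB : p ≤ (P {ν : ProbabilityMeasure I01 |
        ∃ β ∈ Set.Icc (0 : ℝ) 1, (ν : Measure I01) = bdryCombo β}).toReal) (K : ℝ) :
    p / 3 ≤ limsup (fun γ : ℝ =>
      limsup (fun T : ℝ => (1 / T) * (volume {t : ℝ | t ∈ Set.Icc (0 : ℝ) T ∧
        ENNReal.ofReal K ≤ μ (window x γ t) / μ (window x 1 t)}).toReal) atTop)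
      (𝓝[>] (1 : ℝ)) := by
  set m : ℝ := min (1 / 2) (1 / max K 1) with hm
  have hmaxpos : (0 : ℝ) < max K 1 := lt_of_lt_of_le one_pos (le_max_right _ _)
  have hmpos : 0 < m := lt_min (by norm_num) (by positivity)
  set en : ℕ → ℝ := fun n => m / (n + 2) with hen
  have hen_pos : ∀ n : ℕ, 0 < en n := fun n => by positivity
  have hen_le : ∀ n : ℕ, en n ≤ m := fun n => by
    refine div_le_self hmpos.le ?_
    have : (0 : ℝ) ≤ (n : ℝ) := Nat.cast_nonneg n
    linarith
  have hen_lt1 : ∀ n, en n < 1 :=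
    fun n => lt_of_le_of_lt (le_trans (hen_le n) (min_le_left _ _)) (by norm_num)
  have hKen : ∀ n, K ≤ 1 / en n := by
    intro n
    have h1 : en n ≤ 1 / max K 1 := le_trans (hen_le n) (min_le_right _ _)
    have h2 := one_div_le_one_div_of_le (hen_pos n) h1
    rw [one_div_one_div] at h2
    exact le_trans (le_max_left _ _) h2
  have hγ_gt : ∀ n, 1 < (1 - en n)⁻¹ := by
    intro n
    have h01 : 0 < 1 - en n := by linarith [hen_lt1 n]
    rw [show (1 - en n)⁻¹ = 1 / (1 - en n) from (one_div _).symm, lt_div_iff₀ h01]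
    linarith [hen_pos n]
  have htend : Tendsto (fun n => (1 - en n)⁻¹) atTop (𝓝[>] (1 : ℝ)) := by
    have h1 : Tendsto en atTop (𝓝 0) := by
      rw [hen]
      exact Tendsto.div_atTop tendsto_const_nhds
        (tendsto_atTop_add_const_right _ 2 tendsto_natCast_atTop_atTop)
    have h3 : Tendsto (fun n => 1 - en n) atTop (𝓝 1) := by
      simpa using tendsto_const_nhds.sub h1
    have h2 : Tendsto (fun n => (1 - en n)⁻¹) atTop (𝓝 1) := by
      simpa using h3.inv₀ one_ne_zero
    rw [tendsto_nhdsWithin_iff]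
    exact ⟨h2, Eventually.of_forall fun n => Set.mem_Ioi.2 (hγ_gt n)⟩
  refine le_limsup_of_frequently_le ?_ ⟨1, ?_⟩
  · refine htend.frequently (Frequently.of_forall fun n => ?_)
    exact key_limsup hx hom hp hPB (hen_pos n) (hen_lt1 n) (hKen n)
  · rw [eventually_map]
    exact Eventually.of_forall fun γ => F_limsup_le_one γ K

end OmegaTC

/-- If `μ` satisfies condition (TC) at `x ∈ supp μ`, then every ω-limit point
`P` of `T ↦ ⟨μ⟩_{x,T}` gives zero mass to `{(1-β)δ_{-1} + βδ_1 : 0 ≤ β ≤ 1}`. -/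
theorem omegaLimit_null_of_TC
    (μ : Measure ℝ) [IsLocallyFiniteMeasure μ] (x : ℝ) (hx : MemSupp μ x)
    (hTC : CondTC μ x) :
    ∀ P : Measure (ProbabilityMeasure I01), IsProbabilityMeasure P →
      IsOmegaLimitDist μ x P →
      P {ν : ProbabilityMeasure I01 |
          ∃ β ∈ Set.Icc (0 : ℝ) 1, (ν : Measure I01) = bdryCombo β} = 0 := by
  intro P hPprob hom
  by_contra hPB
  haveI := hPprob
  have hp : 0 < (P {ν : ProbabilityMeasure I01 |
      ∃ β ∈ Set.Icc (0 : ℝ) 1, (ν : Measure I01) = bdryCombo β}).toReal :=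
    ENNReal.toReal_pos hPB (measure_ne_top P _)
  have hev := hTC.eventually (eventually_lt_nhds (by positivity :
    (0 : ℝ) < (P {ν : ProbabilityMeasure I01 |
      ∃ β ∈ Set.Icc (0 : ℝ) 1, (ν : Measure I01) = bdryCombo β}).toReal / 3))
  obtain ⟨K, hK⟩ := hev.exists
  exact absurd (OmegaTC.key_outer hx hom hp le_rfl K) (not_le.2 hK)
end
end

section
/- Let μ be a Radon measure on ℝ with 0 ∈ supp μ that satisfies condition (TC) at x = 0. Let A ⊆ [-1,1] be an interval containing 0, and for δ > 0 and t ≥ δ define h_δ(t) = μ(e^{−(t−δ)}A)/μ(I_{t+δ}) − μ(e^{−(t+δ)}A)/μ(I_{t−δ}). Then for every α > 0, lim_{δ→0} limsup_{T→∞} (1/T)·λ({t ∈ [δ, T] : h_δ(t) ≥ α}) = 0. -/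
open MeasureTheory Filter Topology Set
open scoped ENNReal NNReal

noncomputable section

set_option maxHeartbeats 1000000

namespace HDAux

variable (μ : Measure ℝ) (A : Set ℝ)

def mR (s : ℝ) : ℝ := (μ (window 0 1 s)).toReal
def aR (s : ℝ) : ℝ := (μ ((fun a => Real.exp (-s) * a) '' A)).toReal
def phi (s : ℝ) : ℝ := Real.log (aR μ A s + mR μ s)

variable [IsLocallyFiniteMeasure μ]

lemma win_ne_top (x γ s : ℝ) : μ (window x γ s) ≠ ⊤ := measure_Icc_lt_top.ne

lemma win_pos (h0 : MemSupp μ 0) (γ s : ℝ) (hγ : 1 ≤ γ) : 0 < μ (window 0 γ s) := by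
  refine lt_of_lt_of_le (h0 (Real.exp (-s)) (Real.exp_pos _)) (measure_mono ?_)
  intro x hx
  simp only [mem_Ioo] at hx
  simp only [window, mem_Icc]
  have he := (Real.exp_pos (-s)).le
  constructor <;> nlinarith [hx.1, hx.2]

lemma win_anti {γ : ℝ} (hγ : 0 ≤ γ) : Antitone fun s => μ (window 0 γ s) := by
  intro s s' h
  refine measure_mono (Icc_subset_Icc ?_ ?_) <;>
  · have hee : Real.exp (-s') ≤ Real.exp (-s) := Real.exp_le_exp.mpr (by linarith)
    have := mul_le_mul_of_nonneg_left hee hγ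
    simp only [zero_sub, zero_add]
    linarith

lemma aset_sub_win (hAI : A ⊆ I01) (s : ℝ) :
    (fun a => Real.exp (-s) * a) '' A ⊆ window 0 1 s := by
  rintro _ ⟨x, hx, rfl⟩
  have h1 := hAI hx
  simp only [I01, mem_Icc] at h1
  simp only [window, mem_Icc, one_mul, zero_sub, zero_add]
  have he := (Real.exp_pos (-s)).le
  constructor <;> nlinarith [h1.1, h1.2]

lemma aset_mono (hA0 : (0:ℝ) ∈ A) (hAint : A.OrdConnected) {s s' : ℝ} (hss : s ≤ s') :
    (fun a => Real.exp (-s') * a) '' A ⊆ (fun a => Real.exp (-s) * a) '' A := by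
  rintro _ ⟨x, hx, rfl⟩
  refine ⟨Real.exp (-(s' - s)) * x, ?_, ?_⟩
  · have h01 : 0 < Real.exp (-(s' - s)) := Real.exp_pos _
    have h1 : Real.exp (-(s' - s)) ≤ 1 := Real.exp_le_one_iff.mpr (by linarith)
    rcases le_total 0 x with hx0 | hx0
    · exact hAint.out hA0 hx ⟨by positivity, by nlinarith⟩
    · exact hAint.out hx hA0 ⟨by nlinarith, by nlinarith⟩
  · show Real.exp (-s) * (Real.exp (-(s' - s)) * x) = Real.exp (-s') * x
    rw [← mul_assoc, ← Real.exp_add]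
    congr 2
    ring

variable {μ A}

lemma mR_pos (h0 : MemSupp μ 0) (s : ℝ) : 0 < mR μ s :=
  ENNReal.toReal_pos (win_pos μ h0 1 s le_rfl).ne' (win_ne_top μ 0 1 s)

lemma mR_anti : Antitone (mR μ) := fun s s' h =>
  ENNReal.toReal_le_toReal (win_ne_top μ 0 1 s') (win_ne_top μ 0 1 s) |>.mpr (win_anti μ zero_le_one h)

lemma aR_nonneg (s : ℝ) : 0 ≤ aR μ A s := ENNReal.toReal_nonneg

lemma aR_le_mR (hAI : A ⊆ I01) (s : ℝ) : aR μ A s ≤ mR μ s :=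
  ENNReal.toReal_le_toReal
    (ne_top_of_le_ne_top (win_ne_top μ 0 1 s) (measure_mono (aset_sub_win A hAI s)))
    (win_ne_top μ 0 1 s) |>.mpr (measure_mono (aset_sub_win A hAI s))

lemma aR_anti (hAI : A ⊆ I01) (hA0 : (0:ℝ) ∈ A) (hAint : A.OrdConnected) :
    Antitone (aR μ A) := by
  intro s s' h
  have f1 : μ ((fun a => Real.exp (-s') * a) '' A) ≠ ⊤ :=
    ne_top_of_le_ne_top (win_ne_top μ 0 1 s') (measure_mono (aset_sub_win A hAI s'))
  have f2 : μ ((fun a => Real.exp (-s) * a) '' A) ≠ ⊤ :=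
    ne_top_of_le_ne_top (win_ne_top μ 0 1 s) (measure_mono (aset_sub_win A hAI s))
  exact (ENNReal.toReal_le_toReal f1 f2).mpr (measure_mono (aset_mono A hA0 hAint h))

lemma phi_anti (h0 : MemSupp μ 0) (hAI : A ⊆ I01) (hA0 : (0:ℝ) ∈ A)
    (hAint : A.OrdConnected) : Antitone (phi μ A) := by
  intro s s' h
  have hpos : 0 < aR μ A s' + mR μ s' := by
    have := aR_nonneg (μ := μ) (A := A) s'; have := mR_pos h0 s'; linarith
  exact Real.log_le_log hpos (add_le_add (aR_anti hAI hA0 hAint h) (mR_anti h))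

lemma core_ineq {x1 x2 y1 y2 α : ℝ} (hα : 0 < α) (hy2 : 0 < y2) (hy12 : y2 ≤ y1)
    (hx2 : 0 ≤ x2) (hx21 : x2 ≤ x1) (hx2y : x2 ≤ y2)
    (h : α ≤ x1 / y2 - x2 / y1) : (1 + α / 8) * (x2 + y2) ≤ x1 + y1 := by
  have hy1 : 0 < y1 := lt_of_lt_of_le hy2 hy12
  by_contra hcon
  push_neg at hcon
  have h' : α * (y2 * y1) ≤ x1 * y1 - x2 * y2 := by
    rw [div_sub_div _ _ (ne_of_gt hy2) (ne_of_gt hy1), le_div_iff₀ (by positivity)] at h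
    nlinarith [h]
  have e1 : x1 - x2 < α / 8 * (2 * y2) := by nlinarith
  have e2 : y1 - y2 < α / 8 * (2 * y2) := by nlinarith
  have p1 : (x1 - x2) * y1 < α / 8 * (2 * y2) * y1 := mul_lt_mul_of_pos_right e1 hy1
  have p2 : x2 * (y1 - y2) ≤ y2 * (α / 8 * (2 * y2)) := by nlinarith
  nlinarith [mul_pos hy2 hy1]

/-- The key pointwise bridge: `h_δ(t) ≥ α` forces a `log(1+α/8)` drop of `phi`. -/
lemma bridge (h0 : MemSupp μ 0) (hAI : A ⊆ I01) (hA0 : (0:ℝ) ∈ A)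
    (hAint : A.OrdConnected) {α : ℝ} (hα : 0 < α) {t δ : ℝ} (hδ : 0 < δ)
    (h : α ≤ aR μ A (t - δ) / mR μ (t + δ) - aR μ A (t + δ) / mR μ (t - δ)) :
    Real.log (1 + α / 8) ≤ phi μ A (t - δ) - phi μ A (t + δ) := by
  have h1 : (1 + α / 8) * (aR μ A (t + δ) + mR μ (t + δ)) ≤ aR μ A (t - δ) + mR μ (t - δ) :=
    core_ineq hα (mR_pos h0 _) (mR_anti (by linarith)) (aR_nonneg _)
      (aR_anti hAI hA0 hAint (by linarith)) (aR_le_mR hAI _) h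
  have hY : 0 < aR μ A (t + δ) + mR μ (t + δ) := by
    have := aR_nonneg (μ := μ) (A := A) (t + δ); have := mR_pos h0 (t + δ); linarith
  have hX : 0 < aR μ A (t - δ) + mR μ (t - δ) := by
    have := aR_nonneg (μ := μ) (A := A) (t - δ); have := mR_pos h0 (t - δ); linarith
  have := Real.log_le_log (by positivity) h1
  rw [Real.log_mul (by positivity) (ne_of_gt hY)] at this
  simp only [phi]
  linarith

/-- A `log(2K)` drop of `phi` from `s` to `s'` gives TC-badness at `s'`. -/
lemma drop_ratio (h0 : MemSupp μ 0) (hAI : A ⊆ I01) {K : ℝ} (hK : 0 < K) {s s' : ℝ}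
    (h : Real.log (2 * K) ≤ phi μ A s - phi μ A s') :
    ENNReal.ofReal K ≤ μ (window 0 (Real.exp (s' - s)) s') / μ (window 0 1 s') := by
  have hwin : window 0 (Real.exp (s' - s)) s' = window 0 1 s := by
    simp only [window, one_mul, ← Real.exp_add]
    congr 2 <;> · congr 1; ring
  have hY : 0 < aR μ A s' + mR μ s' := by
    have := aR_nonneg (μ := μ) (A := A) s'; have := mR_pos h0 s'; linarith
  have hX : 0 < aR μ A s + mR μ s := by
    have := aR_nonneg (μ := μ) (A := A) s; have := mR_pos h0 s; linarith
  have h2 : 2 * K * (aR μ A s' + mR μ s') ≤ aR μ A s + mR μ s := by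
    have hlog : Real.log (2 * K * (aR μ A s' + mR μ s')) ≤ Real.log (aR μ A s + mR μ s) := by
      rw [Real.log_mul (by positivity) (ne_of_gt hY)]
      simp only [phi] at h
      linarith
    exact (Real.log_le_log_iff (by positivity) hX).mp hlog
  have hreal : K * mR μ s' ≤ mR μ s := by
    have ha := aR_le_mR (μ := μ) hAI s
    have hb := aR_nonneg (μ := μ) (A := A) s'
    have hm' := (mR_pos h0 s').le
    nlinarith
  rw [hwin, ENNReal.le_div_iff_mul_le (Or.inl (win_pos μ h0 1 s' le_rfl).ne')
    (Or.inl (win_ne_top μ 0 1 s'))]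
  calc ENNReal.ofReal K * μ (window 0 1 s')
      = ENNReal.ofReal K * ENNReal.ofReal (mR μ s') := by
        rw [mR, ENNReal.ofReal_toReal (win_ne_top μ 0 1 s')]
    _ = ENNReal.ofReal (K * mR μ s') := (ENNReal.ofReal_mul hK.le).symm
    _ ≤ ENNReal.ofReal (mR μ s) := ENNReal.ofReal_le_ofReal hreal
    _ = μ (window 0 1 s) := by rw [mR, ENNReal.ofReal_toReal (win_ne_top μ 0 1 s)]


lemma aR_def (μ : Measure ℝ) (A : Set ℝ) (s : ℝ) :
    aR μ A s = (μ ((fun a => Real.exp (-s) * a) '' A)).toReal := rfl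

lemma mR_def (μ : Measure ℝ) (s : ℝ) : mR μ s = (μ (window 0 1 s)).toReal := rfl

lemma count_bound (φ : ℝ → ℝ) (hφ : Antitone φ) {c L : ℝ} (hc : 0 < c)
    {δ T : ℝ} (hδ : 0 < δ) (N : ℕ) :
    (N : ℝ≥0∞) * volume {t : ℝ | t ∈ Icc δ T ∧ c ≤ φ (t - δ) - φ (t + δ)}
      ≤ ENNReal.ofReal (L / c) * volume (Icc ((2 - (N : ℝ)) * δ) (T + ((N : ℝ) - 1) * δ))
        + (N : ℝ≥0∞) * volume {t : ℝ | t ∈ Icc ((2 - (N : ℝ)) * δ) (T + ((N : ℝ) - 1) * δ) ∧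
            L ≤ φ (t - N * δ) - φ (t + N * δ)} := by
  classical
  set J : Set ℝ := Icc ((2 - (N : ℝ)) * δ) (T + ((N : ℝ) - 1) * δ) with hJ
  set D : Set ℝ := {u : ℝ | c ≤ φ (u - δ) - φ (u + δ)} with hD
  set D₀ : Set ℝ := {t : ℝ | t ∈ Icc δ T ∧ c ≤ φ (t - δ) - φ (t + δ)} with hD₀
  set B : Set ℝ := {u : ℝ | L ≤ φ (u - N * δ) - φ (u + N * δ)} with hB
  have hφm : Measurable φ := hφ.measurable
  have hDm : MeasurableSet D := by
    have : Measurable fun u : ℝ => φ (u - δ) - φ (u + δ) :=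
      (hφm.comp (measurable_id.sub_const δ)).sub (hφm.comp (measurable_id.add_const δ))
    exact measurableSet_le measurable_const this
  have hBm : MeasurableSet B := by
    have : Measurable fun u : ℝ => φ (u - N * δ) - φ (u + N * δ) :=
      (hφm.comp (measurable_id.sub_const _)).sub (hφm.comp (measurable_id.add_const _))
    exact measurableSet_le measurable_const this
  set sh : ℕ → ℝ := fun i => (2 * (i : ℝ) + 1 - N) * δ with hsh
  set E : ℕ → Set ℝ := fun i => (fun u : ℝ => u + sh i) ⁻¹' D with hE
  have hEm : ∀ i, MeasurableSet (E i) := fun i => hDm.preimage (measurable_id.add_const _)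
  have hstepa : ∀ i < N, volume D₀ ≤ volume (J ∩ E i) := by
    intro i hi
    have h0i : (0 : ℝ) ≤ (i : ℝ) := Nat.cast_nonneg i
    have hiN : (i : ℝ) ≤ (N : ℝ) - 1 := by
      have : (i : ℝ) + 1 ≤ (N : ℝ) := by exact_mod_cast hi
      linarith
    have hlo : -(((N : ℝ) - 1) * δ) ≤ sh i := by
      simp only [hsh]; nlinarith [mul_nonneg (by linarith : (0:ℝ) ≤ 2 * (i:ℝ)) hδ.le]
    have hhi : sh i ≤ ((N : ℝ) - 1) * δ := by
      simp only [hsh]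
      nlinarith [mul_nonneg (by linarith : (0:ℝ) ≤ 2 * ((N:ℝ) - 1 - (i:ℝ))) hδ.le]
    have hkey : (fun u : ℝ => u + sh i) ⁻¹' D₀ ⊆ J ∩ E i := by
      intro u hu
      have hu1 : u + sh i ∈ Icc δ T := hu.1
      refine ⟨⟨?_, ?_⟩, hu.2⟩
      · have := hu1.1; linarith
      · have := hu1.2; linarith
    calc volume D₀ = volume ((fun u : ℝ => u + sh i) ⁻¹' D₀) :=
          (measure_preimage_add_right volume (sh i) D₀).symm
      _ ≤ volume (J ∩ E i) := measure_mono hkey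
  have hsum : (N : ℝ≥0∞) * volume D₀ ≤
      ∫⁻ t in J, ∑ i ∈ Finset.range N, (E i).indicator 1 t := by
    rw [lintegral_finset_sum _ (fun i _ => (measurable_one.indicator (hEm i)))]
    have hterm : ∀ i ∈ Finset.range N,
        volume D₀ ≤ ∫⁻ t in J, (E i).indicator 1 t := by
      intro i hi
      rw [lintegral_indicator_one (hEm i), Measure.restrict_apply (hEm i), inter_comm]
      exact hstepa i (Finset.mem_range.mp hi)
    calc (N : ℝ≥0∞) * volume D₀ = ∑ _i ∈ Finset.range N, volume D₀ := by
          simp [Finset.sum_const, nsmul_eq_mul]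
      _ ≤ _ := Finset.sum_le_sum hterm
  have hpt : ∀ t : ℝ, ∑ i ∈ Finset.range N, (E i).indicator 1 t
      ≤ ENNReal.ofReal (L / c) + B.indicator (fun _ => (N : ℝ≥0∞)) t := by
    intro t
    have hcard : ∑ i ∈ Finset.range N, (E i).indicator (1 : ℝ → ℝ≥0∞) t
        = (((Finset.range N).filter (fun i => t ∈ E i)).card : ℝ≥0∞) := by
      simp [Set.indicator_apply]
    by_cases ht : t ∈ B
    · rw [hcard, Set.indicator_of_mem ht]
      have hle : ((Finset.range N).filter (fun i => t ∈ E i)).card ≤ N := by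
        calc _ ≤ (Finset.range N).card := Finset.card_filter_le _ _
          _ = N := Finset.card_range N
      calc ((((Finset.range N).filter (fun i => t ∈ E i)).card : ℕ) : ℝ≥0∞) ≤ (N : ℝ≥0∞) := by
            exact_mod_cast hle
        _ ≤ ENNReal.ofReal (L / c) + (N : ℝ≥0∞) := le_add_self
    · rw [hcard, Set.indicator_of_notMem ht, add_zero]
      set g : ℕ → ℝ := fun i => φ (t + (2 * (i : ℝ) - N) * δ) with hg
      have htel : ∑ i ∈ Finset.range N, (g i - g (i + 1)) = g 0 - g N :=
        Finset.sum_range_sub' g N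
      have hg0 : g 0 = φ (t - N * δ) := by simp only [hg]; congr 1; push_cast; ring
      have hgN : g N = φ (t + N * δ) := by simp only [hg]; congr 1; ring
      have hdropnn : ∀ i : ℕ, 0 ≤ g i - g (i + 1) := by
        intro i
        rw [sub_nonneg]
        apply hφ
        push_cast
        nlinarith [hδ.le]
      have hmem : ∀ i ∈ (Finset.range N).filter (fun i => t ∈ E i), c ≤ g i - g (i + 1) := by
        intro i hi
        have hti : t ∈ E i := (Finset.mem_filter.mp hi).2
        have h1 : c ≤ φ (t + sh i - δ) - φ (t + sh i + δ) := hti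
        have e1 : t + sh i - δ = t + (2 * (i : ℝ) - N) * δ := by simp only [hsh]; ring
        have e2 : t + sh i + δ = t + (2 * ((i : ℝ) + 1) - N) * δ := by simp only [hsh]; ring
        rw [e1, e2] at h1
        simp only [hg]
        push_cast
        convert h1 using 3 <;> ring
      set k := ((Finset.range N).filter (fun i => t ∈ E i)).card with hk
      have hck : c * k ≤ g 0 - g N := by
        calc c * k = ∑ _i ∈ (Finset.range N).filter (fun i => t ∈ E i), c := by
              rw [Finset.sum_const, nsmul_eq_mul]; ring
          _ ≤ ∑ i ∈ (Finset.range N).filter (fun i => t ∈ E i), (g i - g (i + 1)) :=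
              Finset.sum_le_sum hmem
          _ ≤ ∑ i ∈ Finset.range N, (g i - g (i + 1)) :=
              Finset.sum_le_sum_of_subset_of_nonneg (Finset.filter_subset _ _)
                (fun i _ _ => hdropnn i)
          _ = g 0 - g N := htel
      have hdropL : g 0 - g N < L := by
        rw [hg0, hgN]
        exact lt_of_not_ge ht
      have hkLc : (k : ℝ) ≤ L / c := by
        rw [le_div_iff₀ hc]; nlinarith
      calc (k : ℝ≥0∞) = ENNReal.ofReal (k : ℝ) := by rw [ENNReal.ofReal_natCast]
        _ ≤ ENNReal.ofReal (L / c) := ENNReal.ofReal_le_ofReal hkLc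
  have hint : ∫⁻ t in J, ∑ i ∈ Finset.range N, (E i).indicator 1 t
      ≤ ENNReal.ofReal (L / c) * volume J + (N : ℝ≥0∞) * volume (B ∩ J) := by
    calc _ ≤ ∫⁻ t in J, (ENNReal.ofReal (L / c) + B.indicator (fun _ => (N : ℝ≥0∞)) t) :=
          lintegral_mono hpt
      _ = ENNReal.ofReal (L / c) * volume J + (N : ℝ≥0∞) * volume (B ∩ J) := by
          rw [lintegral_add_left measurable_const, lintegral_const,
            lintegral_indicator_const hBm, Measure.restrict_apply_univ,
            Measure.restrict_apply hBm]
  refine (hsum.trans hint).trans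
    (add_le_add le_rfl (mul_le_mul_right (measure_mono ?_) _))
  rintro u ⟨hB', hJ'⟩
  exact ⟨hJ', hB'⟩

lemma frac01 {r T : ℝ} (hr : 0 ≤ r) {S : Set ℝ} (hS : S ⊆ Icc r T) :
    (1 / T) * (volume S).toReal ∈ Icc (0 : ℝ) 1 := by
  rcases le_or_gt T 0 with hT | hT
  · rcases eq_or_lt_of_le hT with hT0 | hT0
    · rw [hT0]; norm_num
    · have hST : S = ∅ := by
        rw [← subset_empty_iff]
        rwa [Icc_eq_empty (not_le.mpr (lt_of_lt_of_le hT0 hr))] at hS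
      rw [hST]
      norm_num
  · have hfin : volume S ≤ ENNReal.ofReal (T - r) := by
      calc volume S ≤ volume (Icc r T) := measure_mono hS
        _ = ENNReal.ofReal (T - r) := Real.volume_Icc
    have h2 : (volume S).toReal ≤ T := by
      calc (volume S).toReal ≤ (ENNReal.ofReal (T - r)).toReal :=
            ENNReal.toReal_mono ENNReal.ofReal_ne_top hfin
        _ ≤ T := by rw [ENNReal.toReal_ofReal']; exact max_le (by linarith) hT.le
    have h3 : (1 / T) * (volume S).toReal ≤ (1 / T) * T :=
      mul_le_mul_of_nonneg_left h2 (by positivity)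
    rw [one_div_mul_cancel (ne_of_gt hT)] at h3
    exact ⟨by positivity, h3⟩


end HDAux

open HDAux in
/-- Lemma (hdeltalemma): suppose `μ` has `0 ∈ supp μ` and satisfies (TC) at `0`.
Let `A ⊆ I` be an interval containing `0`, and for `δ > 0` let
`h_δ(t) = μ(A_{t-δ})/μ(I_{t+δ}) - μ(A_{t+δ})/μ(I_{t-δ})`.  Then for every `α > 0`,
`lim_{δ→0⁺} limsup_{T→∞} (1/T)·λ({t ∈ [δ,T] : h_δ(t) ≥ α}) = 0`. -/
theorem hdelta_lemma (μ : Measure ℝ) [IsLocallyFiniteMeasure μ]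
    (h0 : MemSupp μ 0) (hTC : CondTC μ 0)
    (A : Set ℝ) (hAI : A ⊆ I01) (hA0 : (0 : ℝ) ∈ A) (hAint : A.OrdConnected)
    (α : ℝ) (hα : 0 < α) :
    Tendsto (fun δ : ℝ =>
        limsup (fun T : ℝ =>
            (1 / T) * (volume {t : ℝ | t ∈ Set.Icc δ T ∧
              α ≤ (μ ((fun a => Real.exp (-(t - δ)) * a) '' A)).toReal /
                    (μ (window 0 1 (t + δ))).toReal
                - (μ ((fun a => Real.exp (-(t + δ)) * a) '' A)).toReal /
                    (μ (window 0 1 (t - δ))).toReal}).toReal)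
          atTop)
      (𝓝[>] (0 : ℝ)) (𝓝 0) := by
  classical
  rw [Metric.tendsto_nhds]
  intro ε hε
  have hε8 : 0 < ε / 8 := by linarith
  -- Step 1: extract K from (TC)
  obtain ⟨K, hKlt, hK1⟩ :=
    ((hTC.eventually_lt_const hε8).and (eventually_ge_atTop (1 : ℝ))).exists
  have hK0 : (0 : ℝ) < K := lt_of_lt_of_le one_pos hK1
  -- inner TC quantities are in [0,1]
  have hin01 : ∀ γ T : ℝ, (1 / T) * (volume {t : ℝ | t ∈ Set.Icc (0 : ℝ) T ∧
      ENNReal.ofReal K ≤ μ (window 0 γ t) / μ (window 0 1 t)}).toReal ∈ Icc (0 : ℝ) 1 :=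
    fun γ T => frac01 le_rfl (fun t ht => ht.1)
  -- Step 2: extract γ₀ from the limsup over γ
  have hγev : ∀ᶠ γ in 𝓝[>] (1 : ℝ),
      limsup (fun T : ℝ => (1 / T) * (volume {t : ℝ | t ∈ Set.Icc (0 : ℝ) T ∧
        ENNReal.ofReal K ≤ μ (window 0 γ t) / μ (window 0 1 t)}).toReal) atTop < ε / 8 := by
    refine eventually_lt_of_limsup_lt hKlt (isBoundedUnder_of ⟨1, fun γ => ?_⟩)
    exact limsup_le_of_le (isCoboundedUnder_le_of_le atTop fun T => (hin01 γ T).1)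
      (Eventually.of_forall fun T => (hin01 γ T).2)
  obtain ⟨γ₀, hγ₀1, hγ₀sub⟩ := (nhdsGT_basis (1 : ℝ)).eventually_iff.mp hγev
  have hγ₀pos : (0 : ℝ) < γ₀ := lt_trans one_pos hγ₀1
  have hlogγ₀ : 0 < Real.log γ₀ := Real.log_pos hγ₀1
  -- Step 3: constants
  have hc : 0 < Real.log (1 + α / 8) := Real.log_pos (by linarith)
  set c : ℝ := Real.log (1 + α / 8) with hcdef
  have hL : 0 < Real.log (2 * K) := Real.log_pos (by linarith)
  set L : ℝ := Real.log (2 * K) with hLdef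
  set M : ℝ := L / c with hMdef
  have hM : 0 < M := div_pos hL hc
  set N : ℕ := ⌈8 * M / ε⌉₊ + 1 with hNdef
  have hNpos : (0 : ℝ) < N := by positivity
  have hN1' : (1 : ℝ) ≤ (N : ℝ) := by
    exact_mod_cast Nat.one_le_cast.mpr (Nat.le_add_left 1 ⌈8 * M / ε⌉₊)
  have hNM : 8 * M / ε ≤ (N : ℝ) := by
    calc 8 * M / ε ≤ (⌈8 * M / ε⌉₊ : ℝ) := Nat.le_ceil _
      _ ≤ (N : ℝ) := by rw [hNdef]; push_cast; linarith
  have hMN : M / (N : ℝ) ≤ ε / 8 := by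
    rw [div_le_iff₀ hNpos]
    have h8 : 8 * M ≤ (N : ℝ) * ε := by
      have := (div_le_iff₀ (by linarith : (0 : ℝ) < ε)).mp hNM
      linarith
    linarith
  -- Step 4: the eventual estimate, for δ ∈ (0, δ₀)
  refine (nhdsGT_basis (0 : ℝ)).eventually_iff.mpr
    ⟨min 1 (Real.log γ₀ / (2 * N)), by positivity, fun δ hδm => ?_⟩
  obtain ⟨hδpos, hδlt⟩ := hδm
  have hδ1 : δ < 1 := lt_of_lt_of_le hδlt (min_le_left _ _)
  have hδγ : 2 * (N : ℝ) * δ < Real.log γ₀ := by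
    have h := lt_of_lt_of_le hδlt (min_le_right _ _)
    rw [lt_div_iff₀ (by positivity)] at h
    linarith
  set γ : ℝ := Real.exp (2 * (N : ℝ) * δ) with hγdef
  have hγ1 : 1 < γ := by
    rw [hγdef, show (1 : ℝ) = Real.exp 0 from Real.exp_zero.symm]
    exact Real.exp_lt_exp.mpr (by positivity)
  have hγγ₀ : γ < γ₀ := by
    rw [hγdef, ← Real.exp_log hγ₀pos]
    exact Real.exp_lt_exp.mpr hδγ
  have hγmem := hγ₀sub ⟨hγ1, hγγ₀⟩
  have hevT : ∀ᶠ T in atTop, (1 / T) * (volume {t : ℝ | t ∈ Set.Icc (0 : ℝ) T ∧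
      ENNReal.ofReal K ≤ μ (window 0 γ t) / μ (window 0 1 t)}).toReal < ε / 8 :=
    eventually_lt_of_limsup_lt hγmem (isBoundedUnder_of ⟨1, fun T => (hin01 γ T).2⟩)
  obtain ⟨T₀, hT₀⟩ := eventually_atTop.mp hevT
  -- the function whose limsup we bound
  set G : ℝ → ℝ := fun T : ℝ =>
      (1 / T) * (volume {t : ℝ | t ∈ Set.Icc δ T ∧
        α ≤ (μ ((fun a => Real.exp (-(t - δ)) * a) '' A)).toReal /
              (μ (window 0 1 (t + δ))).toReal
          - (μ ((fun a => Real.exp (-(t + δ)) * a) '' A)).toReal /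
              (μ (window 0 1 (t - δ))).toReal}).toReal with hGdef
  have hG01 : ∀ T, G T ∈ Icc (0 : ℝ) 1 := fun T => frac01 hδpos.le (fun t ht => ht.1)
  -- eventual bound for G
  have hGbound : ∀ᶠ T in atTop, G T ≤ ε / 2 := by
    filter_upwards [eventually_ge_atTop (max T₀ 1),
      eventually_ge_atTop (2 * (N : ℝ) * δ + δ)] with T hTm hT2
    have hT1 : (1 : ℝ) ≤ T := le_trans (le_max_right _ _) hTm
    have hTT₀ : T₀ ≤ T := le_trans (le_max_left _ _) hTm
    have hTpos : (0 : ℝ) < T := by linarith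
    have hNδ : 0 ≤ 2 * (N : ℝ) * δ := by positivity
    have htc := hT₀ (T + 2 * (N : ℝ) * δ) (by linarith)
    -- sets
    set S : Set ℝ := {t : ℝ | t ∈ Set.Icc δ T ∧
        α ≤ (μ ((fun a => Real.exp (-(t - δ)) * a) '' A)).toReal /
              (μ (window 0 1 (t + δ))).toReal
          - (μ ((fun a => Real.exp (-(t + δ)) * a) '' A)).toReal /
              (μ (window 0 1 (t - δ))).toReal} with hSdef
    set D₀ : Set ℝ := {t : ℝ | t ∈ Icc δ T ∧ c ≤ phi μ A (t - δ) - phi μ A (t + δ)} with hD₀def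
    set J : Set ℝ := Icc ((2 - (N : ℝ)) * δ) (T + ((N : ℝ) - 1) * δ) with hJdef
    set B₀ : Set ℝ := {t : ℝ | t ∈ J ∧ L ≤ phi μ A (t - N * δ) - phi μ A (t + N * δ)} with hB₀def
    set TC : Set ℝ := {t : ℝ | t ∈ Set.Icc (0 : ℝ) (T + 2 * (N : ℝ) * δ) ∧
        ENNReal.ofReal K ≤ μ (window 0 γ t) / μ (window 0 1 t)} with hTCdef
    -- S ⊆ D₀
    have hSD : volume S ≤ volume D₀ := by
      refine measure_mono fun t ht => ⟨ht.1, ?_⟩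
      refine bridge (μ := μ) h0 hAI hA0 hAint hα hδpos ?_
      have h2 := ht.2
      rwa [aR_def, aR_def, mR_def, mR_def]
    -- count bound
    have hCB := count_bound (phi μ A) (phi_anti (μ := μ) (A := A) h0 hAI hA0 hAint) (L := L) hc (δ := δ) (T := T) hδpos N
    -- B₀ ⊆ shifted TC
    have hBTC : volume B₀ ≤ volume TC := by
      have hsub : B₀ ⊆ (fun t => t + (N : ℝ) * δ) ⁻¹' TC := by
        intro t ht
        obtain ⟨htJ, htd⟩ := ht
        obtain ⟨htl, htr⟩ := htJ
        have hexp1 : (2 - (N : ℝ)) * δ = 2 * δ - (N : ℝ) * δ := by ring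
        have hexp2 : ((N : ℝ) - 1) * δ = (N : ℝ) * δ - δ := by ring
        rw [hexp1] at htl
        rw [hexp2] at htr
        show t + (N : ℝ) * δ ∈ TC
        rw [hTCdef]
        refine ⟨⟨by linarith, by linarith⟩, ?_⟩
        have hdr := drop_ratio (μ := μ) (A := A) h0 hAI hK0 (s := t - (N : ℝ) * δ) (s' := t + (N : ℝ) * δ) htd
        have harg : (t + (N : ℝ) * δ) - (t - (N : ℝ) * δ) = 2 * (N : ℝ) * δ := by ring
        rw [harg] at hdr
        exact hdr
      calc volume B₀ ≤ volume ((fun t => t + (N : ℝ) * δ) ⁻¹' TC) := measure_mono hsub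
        _ = volume TC := measure_preimage_add_right volume _ _
    -- finiteness
    have hJfin : volume J ≠ ⊤ := measure_Icc_lt_top.ne
    have hD₀fin : volume D₀ ≠ ⊤ :=
      ne_top_of_le_ne_top measure_Icc_lt_top.ne (measure_mono fun t ht => ht.1)
    have hB₀fin : volume B₀ ≠ ⊤ :=
      ne_top_of_le_ne_top hJfin (measure_mono fun t ht => ht.1)
    have hTCfin : volume TC ≠ ⊤ :=
      ne_top_of_le_ne_top measure_Icc_lt_top.ne (measure_mono fun t ht => ht.1)
    -- toReal of count bound
    have hreal : (N : ℝ) * (volume D₀).toReal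
        ≤ M * (volume J).toReal + (N : ℝ) * (volume B₀).toReal := by
      have hRne : ENNReal.ofReal (L / c) * volume J + (N : ℝ≥0∞) * volume B₀ ≠ ⊤ := by
        refine ENNReal.add_ne_top.mpr ⟨?_, ?_⟩
        · exact ENNReal.mul_ne_top ENNReal.ofReal_ne_top hJfin
        · exact ENNReal.mul_ne_top (ENNReal.natCast_ne_top N) hB₀fin
      have h2 := ENNReal.toReal_mono hRne hCB
      rw [ENNReal.toReal_add (ENNReal.mul_ne_top ENNReal.ofReal_ne_top hJfin)
          (ENNReal.mul_ne_top (ENNReal.natCast_ne_top N) hB₀fin),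
        ENNReal.toReal_mul, ENNReal.toReal_mul, ENNReal.toReal_ofReal (by positivity),
        ENNReal.toReal_mul, ENNReal.toReal_natCast] at h2
      rw [hMdef]
      exact h2
    -- real estimates
    have hvolJ : (volume J).toReal ≤ 2 * T := by
      rw [hJdef, Real.volume_Icc]
      have harg : T + ((N : ℝ) - 1) * δ - (2 - (N : ℝ)) * δ = T + (2 * (N : ℝ) - 3) * δ := by
        ring
      rw [harg]
      calc (ENNReal.ofReal (T + (2 * (N : ℝ) - 3) * δ)).toReal
          ≤ T + (2 * (N : ℝ) - 3) * δ := by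
            rw [ENNReal.toReal_ofReal']
            exact max_le le_rfl (by nlinarith [hδpos.le, hN1', hT2])
        _ ≤ 2 * T := by nlinarith [hδpos.le]
    have hdiv : (volume D₀).toReal ≤ M / (N : ℝ) * (volume J).toReal + (volume B₀).toReal := by
      have hNne : (N : ℝ) ≠ 0 := ne_of_gt hNpos
      have heq : (N : ℝ) * (M / (N : ℝ) * (volume J).toReal + (volume B₀).toReal)
          = M * (volume J).toReal + (N : ℝ) * (volume B₀).toReal := by
        field_simp
      have := hreal
      rw [← heq] at this
      exact le_of_mul_le_mul_left this hNpos
    have hvS : (volume S).toReal ≤ (volume D₀).toReal := ENNReal.toReal_mono hD₀fin hSD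
    have hvB : (volume B₀).toReal ≤ (volume TC).toReal := ENNReal.toReal_mono hTCfin hBTC
    have hvTC : (volume TC).toReal ≤ (T + 2 * (N : ℝ) * δ) * (ε / 8) := by
      have hT'pos : (0 : ℝ) < T + 2 * (N : ℝ) * δ := by linarith
      have heq : (T + 2 * (N : ℝ) * δ) *
          ((1 / (T + 2 * (N : ℝ) * δ)) * (volume TC).toReal) = (volume TC).toReal := by
        field_simp
      calc (volume TC).toReal
          = (T + 2 * (N : ℝ) * δ) *
            ((1 / (T + 2 * (N : ℝ) * δ)) * (volume TC).toReal) := heq.symm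
        _ ≤ (T + 2 * (N : ℝ) * δ) * (ε / 8) :=
            mul_le_mul_of_nonneg_left (le_of_lt htc) (by linarith)
    -- assemble
    have hJnn : 0 ≤ (volume J).toReal := ENNReal.toReal_nonneg
    have hfinal : (volume S).toReal ≤ T * (ε / 2) := by
      have b1 : M / (N : ℝ) * (volume J).toReal ≤ (ε / 8) * (2 * T) := by
        apply mul_le_mul hMN hvolJ hJnn (by linarith)
      have b2 : (volume B₀).toReal ≤ 2 * T * (ε / 8) := by
        calc (volume B₀).toReal ≤ (volume TC).toReal := hvB
          _ ≤ (T + 2 * (N : ℝ) * δ) * (ε / 8) := hvTC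
          _ ≤ 2 * T * (ε / 8) := by nlinarith
      calc (volume S).toReal ≤ (volume D₀).toReal := hvS
        _ ≤ M / (N : ℝ) * (volume J).toReal + (volume B₀).toReal := hdiv
        _ ≤ (ε / 8) * (2 * T) + 2 * T * (ε / 8) := add_le_add b1 b2
        _ = T * (ε / 2) := by ring
    show (1 / T) * (volume S).toReal ≤ ε / 2
    rw [one_div, inv_mul_le_iff₀ hTpos]
    linarith
  -- Step 5: conclude
  have hcb : IsCoboundedUnder (· ≤ ·) atTop G :=
    isCoboundedUnder_le_of_le atTop fun T => (hG01 T).1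
  have hup : limsup G atTop ≤ ε / 2 := limsup_le_of_le hcb hGbound
  have hlo : 0 ≤ limsup G atTop :=
    le_limsup_of_frequently_le (Frequently.of_forall fun T => (hG01 T).1)
      (isBoundedUnder_of ⟨1, fun T => (hG01 T).2⟩)
  rw [Real.dist_eq, sub_zero, abs_of_nonneg hlo]
  linarith
end
end

section
/- Let h : [0,∞) → [0,∞) be a decreasing function and let ε > 0, α > 0 and T ≥ ε. Then λ({t ∈ [ε, T] : h(t−ε) − h(t) ≥ α}) ≤ (ε/α)·(h(0) − h(T)), where λ is Lebesgue measure. -/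
open MeasureTheory Filter Topology Set
open scoped ENNReal

/-- If `h : [0,∞) → [0,∞)` is decreasing, `ε > 0`, `α > 0` and `T ≥ ε`, then
`λ({t ∈ [ε,T] : h(t-ε) - h(t) ≥ α}) ≤ (ε/α)·(h(0) - h(T))`. -/
theorem measure_decrement_set_le (h : ℝ → ℝ)
    (hmono : AntitoneOn h (Set.Ici (0 : ℝ))) (hnonneg : ∀ t ∈ Set.Ici (0 : ℝ), 0 ≤ h t)
    (ε α T : ℝ) (hε : 0 < ε) (hα : 0 < α) (hT : ε ≤ T) :
    volume {t : ℝ | t ∈ Set.Icc ε T ∧ α ≤ h (t - ε) - h t} ≤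
      ENNReal.ofReal ((ε / α) * (h 0 - h T)) := by
  set H : ℝ → ℝ := fun t => h (max t 0) with hHdef
  have hHanti : Antitone H := by
    intro s t hst
    exact hmono (le_max_right s 0) (le_max_right t 0) (max_le_max hst le_rfl)
  have hHmeas : Measurable H := hHanti.measurable
  have hH0 : H 0 = h 0 := by simp [hHdef]
  have hHT : H T = h T := by simp [hHdef, max_eq_left (le_trans hε.le hT)]
  set g : ℝ → ℝ := fun t => H (t - ε) - H t with hgdef
  set S : Set ℝ := {t : ℝ | t ∈ Set.Icc ε T ∧ α ≤ h (t - ε) - h t} with hSdef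
  have hSeq : S = Set.Icc ε T ∩ {t : ℝ | α ≤ g t} := by
    ext t
    simp only [hSdef, Set.mem_setOf_eq, Set.mem_inter_iff, Set.mem_Icc, hgdef]
    constructor
    · rintro ⟨⟨h1, h2⟩, h3⟩
      refine ⟨⟨h1, h2⟩, ?_⟩
      rw [hHdef]
      simp only [max_eq_left (sub_nonneg.2 h1), max_eq_left (le_trans hε.le h1)]
      exact h3
    · rintro ⟨⟨h1, h2⟩, h3⟩
      refine ⟨⟨h1, h2⟩, ?_⟩
      rw [hHdef] at h3
      simp only [max_eq_left (sub_nonneg.2 h1), max_eq_left (le_trans hε.le h1)] at h3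
      exact h3
  have hgmeas : Measurable g := (hHmeas.comp (measurable_id.sub measurable_const)).sub hHmeas
  have hSmeas : MeasurableSet S := by
    rw [hSeq]; exact measurableSet_Icc.inter (hgmeas measurableSet_Ici)
  have hSsub : S ⊆ Set.Icc ε T := by rw [hSeq]; exact Set.inter_subset_left
  have hSfin : volume S ≠ ⊤ :=
    ne_of_lt (lt_of_le_of_lt (measure_mono hSsub) measure_Icc_lt_top)
  -- integrability
  have hHεanti : Antitone (fun t => H (t - ε)) := fun s t hst => hHanti (by linarith)
  have hint : ∀ a b : ℝ, IntervalIntegrable H volume a b := fun a b =>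
    hHanti.intervalIntegrable
  have hintε : ∀ a b : ℝ, IntervalIntegrable (fun t => H (t - ε)) volume a b := fun a b =>
    hHεanti.intervalIntegrable
  have hIcc : ∀ (f : ℝ → ℝ), (∀ a b : ℝ, IntervalIntegrable f volume a b) →
      ∀ a b : ℝ, IntegrableOn f (Set.Icc a b) volume := fun f hf a b =>
    (integrableOn_Icc_iff_integrableOn_Ioc (f := f) (a := a) (b := b) (μ := volume) enorm_ne_top).2 (hf a b).1
  have hgint : IntegrableOn g (Set.Icc ε T) volume :=
    (hIcc _ hintε ε T).sub (hIcc _ hint ε T)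
  have hgnonneg : ∀ t ∈ Set.Icc ε T, 0 ≤ g t := fun t ht =>
    sub_nonneg.2 (hHanti (by linarith [ht.1] : t - ε ≤ t))
  -- Markov step
  have step1 : α * (volume S).toReal ≤ ∫ t in S, g t := by
    have : ∫ t in S, (α : ℝ) ≤ ∫ t in S, g t := by
      apply setIntegral_mono_on (integrableOn_const (C := α) hSfin enorm_ne_top)
        (hgint.mono_set hSsub) hSmeas
      intro t ht
      rw [hSeq] at ht
      exact ht.2
    rwa [setIntegral_const, smul_eq_mul, mul_comm] at this
  have step2 : ∫ t in S, g t ≤ ∫ t in Set.Icc ε T, g t := by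
    apply setIntegral_mono_set hgint
    · filter_upwards [ae_restrict_mem measurableSet_Icc] with t ht using hgnonneg t ht
    · exact HasSubset.Subset.eventuallyLE hSsub
  have step3 : ∫ t in Set.Icc ε T, g t ≤ ε * (h 0 - h T) := by
    have heq : ∫ t in Set.Icc ε T, g t = ∫ t in ε..T, g t := by
      rw [intervalIntegral.integral_of_le hT, integral_Icc_eq_integral_Ioc]
    rw [heq]
    have hsplit : ∫ t in ε..T, g t = (∫ t in (0:ℝ)..ε, H t) - ∫ t in (T-ε)..T, H t := by
      have h1 : ∫ t in ε..T, g t =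
          (∫ t in ε..T, H (t - ε)) - ∫ t in ε..T, H t :=
        intervalIntegral.integral_sub (hintε ε T) (hint ε T)
      rw [h1, intervalIntegral.integral_comp_sub_right H ε]
      have h2 : ∫ t in (ε - ε)..(T - ε), H t =
          (∫ t in (0:ℝ)..ε, H t) + ∫ t in ε..(T - ε), H t := by
        rw [sub_self, intervalIntegral.integral_add_adjacent_intervals (hint 0 ε) (hint ε (T-ε))]
      have h3 : ∫ t in ε..T, H t =
          (∫ t in ε..(T - ε), H t) + ∫ t in (T-ε)..T, H t := by
        rw [intervalIntegral.integral_add_adjacent_intervals (hint ε (T-ε)) (hint (T-ε) T)]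
      rw [h2, h3]; ring
    rw [hsplit]
    have hub : ∫ t in (0:ℝ)..ε, H t ≤ ε * h 0 := by
      have := intervalIntegral.integral_mono_on hε.le (hint 0 ε)
        intervalIntegrable_const (fun x hx => hHanti hx.1 : ∀ x ∈ Set.Icc 0 ε, H x ≤ H 0)
      simpa [hH0] using this
    have hlb : ε * h T ≤ ∫ t in (T-ε)..T, H t := by
      have := intervalIntegral.integral_mono_on (by linarith : T - ε ≤ T)
        intervalIntegrable_const (hint (T-ε) T)
        (fun x hx => hHanti hx.2 : ∀ x ∈ Set.Icc (T-ε) T, H T ≤ H x)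
      simpa [hHT, sub_sub_cancel] using this
    linarith
  have hfinal : (volume S).toReal ≤ (ε / α) * (h 0 - h T) := by
    rw [div_mul_eq_mul_div, le_div_iff₀ hα, mul_comm]
    calc α * (volume S).toReal ≤ ε * (h 0 - h T) := by linarith
    _ = ε * (h 0 - h T) * 1 := by ring
    _ = _ := by ring
  calc volume S = ENNReal.ofReal (volume S).toReal := (ENNReal.ofReal_toReal hSfin).symm
    _ ≤ ENNReal.ofReal ((ε / α) * (h 0 - h T)) := ENNReal.ofReal_le_ofReal hfinal
end

section
/- Let μ be a Radon measure on ℝ, fix t₀ > 0 and x₀ ∈ supp μ, and let Δ = {(x,t) : 0 ≤ t ≤ t₀, |x − x₀| ≤ e^{−t} − e^{−t₀}}. Then μ_{x,t} → μ_{x₀,t₀} in the weak-* topology as (x,t) → (x₀,t₀) with (x,t) ∈ Δ. -/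
open MeasureTheory Filter Topology Set
open scoped ENNReal NNReal

noncomputable section

section SceneryAux

variable {μ : Measure ℝ}

lemma window_eq (x t : ℝ) :
    window x 1 t = Set.Icc (x - Real.exp (-t)) (x + Real.exp (-t)) := by
  simp [window]

lemma measurableSet_window (x γ t : ℝ) : MeasurableSet (window x γ t) :=
  measurableSet_Icc

lemma window_fin (μ : Measure ℝ) [IsLocallyFiniteMeasure μ] (x γ t : ℝ) :
    μ (window x γ t) ≠ ∞ :=
  (isCompact_Icc.measure_lt_top).ne

/-- The set `Δ`. -/
def Dset (x₀ t₀ : ℝ) : Set (ℝ × ℝ) :=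
  {p : ℝ × ℝ | 0 ≤ p.2 ∧ p.2 ≤ t₀ ∧ |p.1 - x₀| ≤ Real.exp (-p.2) - Real.exp (-t₀)}

lemma window_subset {x₀ t₀ x t : ℝ}
    (h : |x - x₀| ≤ Real.exp (-t) - Real.exp (-t₀)) :
    window x₀ 1 t₀ ⊆ window x 1 t := by
  rw [window_eq, window_eq]
  obtain ⟨h1, h2⟩ := abs_le.1 h
  intro y hy
  exact ⟨by linarith [hy.1], by linarith [hy.2]⟩

lemma window_subset_K {x₀ t₀ x t : ℝ} (ht : 0 ≤ t)
    (h : |x - x₀| ≤ Real.exp (-t) - Real.exp (-t₀)) :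
    window x 1 t ⊆ Set.Icc (x₀ - 2) (x₀ + 2) := by
  rw [window_eq]
  obtain ⟨h1, h2⟩ := abs_le.1 h
  have he : Real.exp (-t) ≤ 1 := Real.exp_le_one_iff.2 (by linarith)
  have he₀ : 0 < Real.exp (-t₀) := Real.exp_pos _
  intro y hy
  exact ⟨by linarith [hy.1], by linarith [hy.2]⟩

lemma embMeasurable (x t : ℝ) :
    MeasurableEmbedding (fun a : I01 => x + Real.exp (-t) * (a : ℝ)) := by
  have h1 : MeasurableEmbedding (Subtype.val : I01 → ℝ) :=
    MeasurableEmbedding.subtype_coe measurableSet_Icc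
  have h2 : MeasurableEmbedding (fun y : ℝ => x + Real.exp (-t) * y) :=
    ((Homeomorph.mulLeft₀ (Real.exp (-t)) (Real.exp_ne_zero _)).trans
      (Homeomorph.addLeft x)).measurableEmbedding
  exact h2.comp h1

lemma range_emb (x t : ℝ) :
    Set.range (fun a : I01 => x + Real.exp (-t) * (a : ℝ)) = window x 1 t := by
  have h : (fun a : I01 => x + Real.exp (-t) * (a : ℝ))
      = (fun y : ℝ => Real.exp (-t) * y + x) ∘ (Subtype.val : I01 → ℝ) := by
    funext a; simp [add_comm]
  rw [h, Set.range_comp, Subtype.range_coe,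
    Set.image_affine_Icc' (Real.exp_pos (-t)) x (-1) 1, window_eq]
  congr 1 <;> ring

lemma isProb {x t : ℝ} (h0 : μ (window x 1 t) ≠ 0) (hfin : μ (window x 1 t) ≠ ∞) :
    IsProbabilityMeasure (sceneryMeasure μ x t) := by
  constructor
  rw [sceneryMeasure, Measure.smul_apply, (embMeasurable x t).comap_apply, Set.image_univ,
    range_emb, smul_eq_mul, ENNReal.inv_mul_cancel h0 hfin]

/-- The extended integrand. -/
def Hfun (φ : C(I01, ℝ)) (p : ℝ × ℝ) (y : ℝ) : ℝ :=
  φ (Set.projIcc (-1 : ℝ) 1 (by norm_num) (Real.exp p.2 * (y - p.1)))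

lemma continuous_Hfun (φ : C(I01, ℝ)) :
    Continuous (fun q : (ℝ × ℝ) × ℝ => Hfun φ q.1 q.2) := by
  apply φ.continuous.comp
  apply continuous_projIcc.comp
  fun_prop

lemma Hfun_bound (φ : C(I01, ℝ)) (p : ℝ × ℝ) (y : ℝ) : ‖Hfun φ p y‖ ≤ ‖φ‖ :=
  φ.norm_coe_le_norm _

lemma integral_scenery {x t : ℝ} (φ : C(I01, ℝ))
    (h0 : μ (window x 1 t) ≠ 0) (hfin : μ (window x 1 t) ≠ ∞) :
    ∫ a, φ a ∂(scenery μ x t : Measure I01)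
      = (μ (window x 1 t)).toReal⁻¹
        * ∫ y, (window x 1 t).indicator (Hfun φ (x, t)) y ∂μ := by
  have hp := isProb h0 hfin
  have hcoe : (scenery μ x t : Measure I01) = sceneryMeasure μ x t := by
    unfold scenery
    exact congrArg Subtype.val (dif_pos hp)
  rw [hcoe, sceneryMeasure, integral_smul_measure, ENNReal.toReal_inv, smul_eq_mul]
  congr 1
  have key : ∀ a : I01, φ a = Hfun φ (x, t) (x + Real.exp (-t) * (a : ℝ)) := by
    intro a
    have h1 : Real.exp t * (x + Real.exp (-t) * (a : ℝ) - x) = (a : ℝ) := by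
      rw [show x + Real.exp (-t) * (a : ℝ) - x = Real.exp (-t) * (a : ℝ) from by ring,
        ← mul_assoc, ← Real.exp_add]
      simp
    rw [Hfun]
    simp only [h1, Set.projIcc_val]
  calc ∫ a, φ a ∂(Measure.comap (fun a : I01 => x + Real.exp (-t) * (a : ℝ)) μ)
      = ∫ a, Hfun φ (x, t) (x + Real.exp (-t) * (a : ℝ))
          ∂(Measure.comap (fun a : I01 => x + Real.exp (-t) * (a : ℝ)) μ) := by
        simp_rw [← key]
    _ = ∫ y, Hfun φ (x, t) y
          ∂((Measure.comap (fun a : I01 => x + Real.exp (-t) * (a : ℝ)) μ).map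
            (fun a : I01 => x + Real.exp (-t) * (a : ℝ))) :=
        ((embMeasurable x t).integral_map _).symm
    _ = ∫ y, Hfun φ (x, t) y ∂(μ.restrict (window x 1 t)) := by
        rw [(embMeasurable x t).map_comap, range_emb]
    _ = ∫ y, (window x 1 t).indicator (Hfun φ (x, t)) y ∂μ := by
        rw [integral_indicator (measurableSet_window x 1 t)]

lemma tendsto_integral_window (μ : Measure ℝ) [IsLocallyFiniteMeasure μ] (x₀ t₀ : ℝ)
    (H : ℝ × ℝ → ℝ → ℝ) (hH : Continuous (fun q : (ℝ × ℝ) × ℝ => H q.1 q.2)) (C : ℝ)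
    (hC : ∀ p y, ‖H p y‖ ≤ C) :
    Tendsto (fun p : ℝ × ℝ => ∫ y, (window p.1 1 p.2).indicator (H p) y ∂μ)
      (𝓝[Dset x₀ t₀] (x₀, t₀))
      (𝓝 (∫ y, (window x₀ 1 t₀).indicator (H (x₀, t₀)) y ∂μ)) := by
  have hC0 : 0 ≤ C := le_trans (norm_nonneg _) (hC (x₀, t₀) 0)
  apply tendsto_integral_filter_of_dominated_convergence
    ((Set.Icc (x₀ - 2) (x₀ + 2)).indicator fun _ => C)
  · filter_upwards with p
    exact ((hH.comp (Continuous.prodMk_right p)).aestronglyMeasurable).indicator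
      (measurableSet_window _ _ _)
  · filter_upwards [eventually_mem_nhdsWithin] with p hp
    filter_upwards with y
    by_cases hy : y ∈ window p.1 1 p.2
    · rw [Set.indicator_of_mem hy, Set.indicator_of_mem (window_subset_K hp.1 hp.2.2 hy)]
      exact hC p y
    · rw [Set.indicator_of_notMem hy, norm_zero]
      exact Set.indicator_nonneg (fun _ _ => hC0) y
  · rw [integrable_indicator_iff measurableSet_Icc]
    exact integrableOn_const isCompact_Icc.measure_lt_top.ne
  · filter_upwards with y
    by_cases hy : y ∈ window x₀ 1 t₀
    · rw [Set.indicator_of_mem hy]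
      have h1 : ∀ᶠ p in 𝓝[Dset x₀ t₀] ((x₀, t₀) : ℝ × ℝ),
          H p y = (window p.1 1 p.2).indicator (H p) y := by
        filter_upwards [eventually_mem_nhdsWithin] with p hp
        exact (Set.indicator_of_mem (window_subset hp.2.2 hy) _).symm
      refine Tendsto.congr' h1 ?_
      exact ((hH.comp (continuous_id.prodMk continuous_const)).tendsto (x₀, t₀)).mono_left
        nhdsWithin_le_nhds
    · rw [Set.indicator_of_notMem hy]
      rw [window_eq, Set.mem_Icc, not_and_or, not_le, not_le] at hy
      have h1 : ∀ᶠ p in 𝓝[Dset x₀ t₀] ((x₀, t₀) : ℝ × ℝ),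
          (0 : ℝ) = (window p.1 1 p.2).indicator (H p) y := by
        rcases hy with hy | hy
        · have hcont : Tendsto (fun p : ℝ × ℝ => p.1 - Real.exp (-p.2))
              (𝓝[Dset x₀ t₀] ((x₀, t₀) : ℝ × ℝ)) (𝓝 (x₀ - Real.exp (-t₀))) := by
            apply Tendsto.mono_left _ nhdsWithin_le_nhds
            exact Continuous.tendsto (by fun_prop) _
          filter_upwards [hcont.eventually_const_lt hy] with p hp
          refine (Set.indicator_of_notMem ?_ _).symm
          rw [window_eq, Set.mem_Icc]
          intro hmem
          linarith [hmem.1]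
        · have hcont : Tendsto (fun p : ℝ × ℝ => p.1 + Real.exp (-p.2))
              (𝓝[Dset x₀ t₀] ((x₀, t₀) : ℝ × ℝ)) (𝓝 (x₀ + Real.exp (-t₀))) := by
            apply Tendsto.mono_left _ nhdsWithin_le_nhds
            exact Continuous.tendsto (by fun_prop) _
          filter_upwards [hcont.eventually_lt_const hy] with p hp
          refine (Set.indicator_of_notMem ?_ _).symm
          rw [window_eq, Set.mem_Icc]
          intro hmem
          linarith [hmem.2]
      exact Tendsto.congr' h1 tendsto_const_nhds

lemma tendsto_mass (μ : Measure ℝ) [IsLocallyFiniteMeasure μ] (x₀ t₀ : ℝ) :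
    Tendsto (fun p : ℝ × ℝ => (μ (window p.1 1 p.2)).toReal)
      (𝓝[Dset x₀ t₀] (x₀, t₀)) (𝓝 (μ (window x₀ 1 t₀)).toReal) := by
  have h := tendsto_integral_window μ x₀ t₀ (fun _ _ => (1 : ℝ)) continuous_const 1
    (by intro p y; simp)
  have heq : ∀ x t : ℝ, (∫ y, (window x 1 t).indicator (fun _ => (1 : ℝ)) y ∂μ)
      = (μ (window x 1 t)).toReal := fun x t =>
    integral_indicator_one (measurableSet_window x 1 t)
  rw [← heq x₀ t₀]
  exact h.congr fun p => heq p.1 p.2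

end SceneryAux

/-- Lemma (contlemma): for `t₀ > 0` and `x₀ ∈ supp μ`, with
`Δ = {(x,t) : 0 ≤ t ≤ t₀, |x - x₀| ≤ e^{-t} - e^{-t₀}}`, the scenery `μ_{x,t}`
converges weak-* to `μ_{x₀,t₀}` as `(x,t) → (x₀,t₀)` within `Δ`. -/
theorem scenery_tendsto_within_Delta (μ : Measure ℝ) [IsLocallyFiniteMeasure μ]
    (x₀ t₀ : ℝ) (ht₀ : 0 < t₀) (hx₀ : MemSupp μ x₀) (φ : C(I01, ℝ)) :
    Tendsto (fun p : ℝ × ℝ => ∫ a, φ a ∂(scenery μ p.1 p.2 : Measure I01))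
      (𝓝[{p : ℝ × ℝ | 0 ≤ p.2 ∧ p.2 ≤ t₀ ∧ |p.1 - x₀| ≤ Real.exp (-p.2) - Real.exp (-t₀)}]
        (x₀, t₀))
      (𝓝 (∫ a, φ a ∂(scenery μ x₀ t₀ : Measure I01))) := by
  have h0 : μ (window x₀ 1 t₀) ≠ 0 := by
    have h := hx₀ (Real.exp (-t₀)) (Real.exp_pos _)
    refine (lt_of_lt_of_le h (measure_mono ?_)).ne'
    rw [window_eq]
    exact Set.Ioo_subset_Icc_self
  have htoR0 : (μ (window x₀ 1 t₀)).toReal ≠ 0 :=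
    ENNReal.toReal_ne_zero.2 ⟨h0, window_fin μ x₀ 1 t₀⟩
  have hnum := tendsto_integral_window μ x₀ t₀ (Hfun φ) (continuous_Hfun φ) ‖φ‖ (Hfun_bound φ)
  have hden := tendsto_mass μ x₀ t₀
  have hlim : Tendsto (fun p : ℝ × ℝ => (μ (window p.1 1 p.2)).toReal⁻¹
      * ∫ y, (window p.1 1 p.2).indicator (Hfun φ p) y ∂μ)
      (𝓝[Dset x₀ t₀] (x₀, t₀))
      (𝓝 ((μ (window x₀ 1 t₀)).toReal⁻¹
        * ∫ y, (window x₀ 1 t₀).indicator (Hfun φ (x₀, t₀)) y ∂μ)) :=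
    (hden.inv₀ htoR0).mul hnum
  have hval : (∫ a, φ a ∂(scenery μ x₀ t₀ : Measure I01))
      = (μ (window x₀ 1 t₀)).toReal⁻¹
        * ∫ y, (window x₀ 1 t₀).indicator (Hfun φ (x₀, t₀)) y ∂μ :=
    integral_scenery φ h0 (window_fin μ x₀ 1 t₀)
  rw [hval]
  refine hlim.congr' ?_
  filter_upwards [eventually_mem_nhdsWithin] with p hp
  have h0p : μ (window p.1 1 p.2) ≠ 0 := by
    intro h
    exact h0 (le_zero_iff.mp (h ▸ measure_mono (window_subset hp.2.2)))
  exact (integral_scenery φ h0p (window_fin μ p.1 1 p.2)).symm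
end
end

section
/- There exist a Radon measure μ on ℝ with 0 ∈ supp μ and an orientation-preserving C¹ diffeomorphism f : ℝ → ℝ with f(0) = 0 and f'(0) = 1 such that the sceneries μ_{0,t} and (fμ)_{0,t} are not asymptotic, i.e. μ_{0,t} − (fμ)_{0,t} does not converge to 0 in the weak-* sense as t → ∞. (For example, μ = Σ_{k=1}^∞ 2^{−k} δ_{2^{−k}} and f with f^{−1}(x) = x − x³ near 0.) -/
open MeasureTheory Filter Topology Set
open scoped ENNReal NNReal

noncomputable section

namespace SceneryEx
open scoped Classical

/-! ### The measure `μ = Σ 2⁻ᵏ δ_{exp(-4ᵏ)}` and the map `f(x) = x + x³` -/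

def bb (k : ℕ) : ℝ := Real.exp (-(4:ℝ)^k)

lemma bb_pos (k : ℕ) : 0 < bb k := Real.exp_pos _

lemma bb_le_half (k : ℕ) : bb k ≤ 1/2 := by
  have h1 : (1:ℝ) ≤ (4:ℝ)^k := one_le_pow₀ (by norm_num)
  have h2 : bb k ≤ Real.exp (-1) := Real.exp_le_exp.2 (by linarith)
  have h3 : Real.exp (-1) ≤ 1/2 := by
    rw [Real.exp_neg]
    rw [inv_le_comm₀ (Real.exp_pos 1) (by norm_num)]
    calc (1/2:ℝ)⁻¹ = 2 := by norm_num
    _ ≤ Real.exp 1 := by linarith [Real.add_one_le_exp 1]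
  linarith

lemma bb_le_iff {k n : ℕ} : bb k ≤ bb n ↔ n ≤ k := by
  rw [bb, bb, Real.exp_le_exp, neg_le_neg_iff]
  exact pow_le_pow_iff_right₀ (by norm_num)

lemma bb_succ (n : ℕ) : bb (n+1) = bb n ^ 4 := by
  rw [bb, bb, ← Real.exp_nat_mul]
  congr 1
  push_cast
  ring

lemma bb_tail {k n : ℕ} (h : n + 1 ≤ k) : bb k ≤ bb n / 8 := by
  have h1 : bb k ≤ bb (n+1) := bb_le_iff.2 h
  rw [bb_succ] at h1
  have h2 : bb n ^ 3 ≤ (1/2:ℝ)^3 := pow_le_pow_left₀ (bb_pos n).le (bb_le_half n) 3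
  have h3 := bb_pos n
  nlinarith

def fex (x : ℝ) : ℝ := x + x^3

lemma fex_small {k n : ℕ} (h : n + 1 ≤ k) : fex (bb k) ≤ bb n / 4 := by
  have h1 := bb_tail h
  have h2 := bb_pos k
  have h3 := bb_le_half k
  have h4 : bb k ^ 3 ≤ bb k := pow_le_of_le_one h2.le (by linarith) (by norm_num)
  rw [fex]
  linarith

lemma fex_gt {k n : ℕ} (h : k ≤ n) : bb n < fex (bb k) := by
  have h1 : bb n ≤ bb k := bb_le_iff.2 h
  have h2 := bb_pos k
  have h3 : 0 < bb k ^ 3 := by positivity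
  rw [fex]
  linarith

lemma fex_pos (k : ℕ) : 0 < fex (bb k) := by
  have h2 := bb_pos k
  have h3 : 0 < bb k ^ 3 := by positivity
  rw [fex]
  linarith

/-! ### Derivative and bijectivity of `fex` -/

lemma fex_hasDeriv (y : ℝ) : HasDerivAt fex (1 + 3 * y^2) y := by
  have h := (hasDerivAt_id y).add (hasDerivAt_pow 3 y)
  exact h.congr_deriv (by norm_num)

lemma fex_deriv (y : ℝ) : deriv fex y = 1 + 3 * y^2 := (fex_hasDeriv y).deriv

lemma fex_deriv_pos (y : ℝ) : 0 < deriv fex y := by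
  rw [fex_deriv]; positivity

lemma fex_contDiff : ContDiff ℝ 1 fex := by
  have : ContDiff ℝ 1 (fun x : ℝ => x + x^3) := contDiff_id.add (contDiff_id.pow 3)
  exact this

lemma fex_cont : Continuous fex := fex_contDiff.continuous

lemma fex_bij : Function.Bijective fex := by
  constructor
  · exact (strictMono_of_deriv_pos fex_deriv_pos).injective
  · apply fex_cont.surjective
    · refine tendsto_atTop_mono' atTop (f₁ := id) ?_ tendsto_id
      filter_upwards [eventually_ge_atTop (0:ℝ)] with x hx
      have : 0 ≤ x^3 := pow_nonneg hx 3
      simp only [fex, id]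
      linarith
    · refine tendsto_atBot_mono' atBot (f₁ := id) ?_ tendsto_id
      filter_upwards [eventually_le_atBot (0:ℝ)] with x hx
      have : x^3 ≤ 0 := Odd.pow_nonpos (by decide) hx
      simp only [fex, id]
      linarith

lemma fex_zero : fex 0 = 0 := by simp [fex]

lemma fex_deriv_zero : deriv fex 0 = 1 := by rw [fex_deriv]; norm_num

/-! ### The measure and its values -/

def μex : Measure ℝ := Measure.sum (fun k : ℕ => ((2:ℝ≥0∞)⁻¹)^k • Measure.dirac (bb k))

lemma μex_apply {S : Set ℝ} (hS : MeasurableSet S) :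
    μex S = ∑' k : ℕ, (if bb k ∈ S then ((2:ℝ≥0∞)⁻¹)^k else 0) := by
  rw [μex, Measure.sum_apply _ hS]
  refine tsum_congr fun k => ?_
  rw [Measure.smul_apply, Measure.dirac_apply' _ hS, Set.indicator_apply]
  by_cases h : bb k ∈ S <;> simp [h]

lemma tsum_tail (n : ℕ) :
    ∑' k : ℕ, (if n ≤ k then ((2:ℝ≥0∞)⁻¹)^k else 0) = ((2:ℝ≥0∞)⁻¹)^n * 2 := by
  have hinj : Function.Injective (fun j : ℕ => n + j) := add_right_injective n
  rw [← Function.Injective.tsum_eq hinj (f := fun k => if n ≤ k then ((2:ℝ≥0∞)⁻¹)^k else 0)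
      (fun x hx => by
        rcases le_or_gt n x with h|h
        · exact ⟨x - n, by simp; omega⟩
        · simp only [Function.mem_support] at hx
          exact absurd (if_neg (by omega)) hx)]
  have : ∀ j : ℕ, (if n ≤ n + j then ((2:ℝ≥0∞)⁻¹)^(n+j) else 0)
      = ((2:ℝ≥0∞)⁻¹)^n * ((2:ℝ≥0∞)⁻¹)^j := by
    intro j
    rw [if_pos (Nat.le_add_right n j), pow_add]
  rw [tsum_congr this, ENNReal.tsum_mul_left, ENNReal.tsum_geometric]
  congr 1
  rw [ENNReal.one_sub_inv_two, inv_inv]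

lemma tsum_single (n : ℕ) :
    ∑' k : ℕ, (if k = n then ((2:ℝ≥0∞)⁻¹)^k else 0) = ((2:ℝ≥0∞)⁻¹)^n := by
  rw [tsum_eq_single n (fun b hb => if_neg hb), if_pos rfl]

lemma mem1 {k n : ℕ} : bb k ∈ Icc (-(bb n)) (bb n) ↔ n ≤ k := by
  rw [mem_Icc]
  constructor
  · exact fun h => bb_le_iff.1 h.2
  · exact fun h => ⟨by linarith [bb_pos k, bb_pos n], bb_le_iff.2 h⟩

lemma mem2 {k n : ℕ} : bb k ∈ Icc (bb n * (3/4)) (bb n) ↔ k = n := by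
  rw [mem_Icc]
  constructor
  · rintro ⟨hl, hu⟩
    have h1 : n ≤ k := bb_le_iff.1 hu
    by_contra hne
    have h2 : n + 1 ≤ k := by omega
    have h3 := bb_tail h2
    have h4 := bb_pos n
    linarith
  · rintro rfl
    have h4 := bb_pos k
    exact ⟨by linarith, le_rfl⟩

lemma mem3 {k n : ℕ} : fex (bb k) ∈ Icc (-(bb n)) (bb n) ↔ n + 1 ≤ k := by
  rw [mem_Icc]
  constructor
  · rintro ⟨hl, hu⟩
    by_contra hk
    have h1 : k ≤ n := by omega
    linarith [fex_gt h1]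
  · intro h
    have h1 := fex_small h
    have h2 := fex_pos k
    have h3 := bb_pos n
    exact ⟨by linarith, by linarith⟩

lemma mem4 {k n : ℕ} : fex (bb k) ∉ Icc (bb n * (1/2)) (bb n) := by
  rw [mem_Icc]
  rintro ⟨hl, hu⟩
  rcases le_or_gt k n with hk|hk
  · linarith [fex_gt hk]
  · have h1 := fex_small (by omega : n + 1 ≤ k)
    have h2 := bb_pos n
    linarith

lemma μex_Icc1 (n : ℕ) : μex (Icc (-(bb n)) (bb n)) = ((2:ℝ≥0∞)⁻¹)^n * 2 := by
  rw [μex_apply measurableSet_Icc, ← tsum_tail n]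
  refine tsum_congr fun k => ?_
  by_cases h : n ≤ k
  · rw [if_pos (mem1.2 h), if_pos h]
  · rw [if_neg (fun hc => h (mem1.1 hc)), if_neg h]

lemma μex_Icc2 (n : ℕ) : μex (Icc (bb n * (3/4)) (bb n)) = ((2:ℝ≥0∞)⁻¹)^n := by
  rw [μex_apply measurableSet_Icc, ← tsum_single n]
  refine tsum_congr fun k => ?_
  by_cases h : k = n
  · rw [if_pos (mem2.2 h), if_pos h]
  · rw [if_neg (fun hc => h (mem2.1 hc)), if_neg h]

lemma fμ_Icc1 (n : ℕ) : (Measure.map fex μex) (Icc (-(bb n)) (bb n)) = ((2:ℝ≥0∞)⁻¹)^n := by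
  rw [Measure.map_apply fex_cont.measurable measurableSet_Icc,
    μex_apply (measurableSet_Icc.preimage fex_cont.measurable)]
  have h1 : ∑' k : ℕ, (if bb k ∈ fex ⁻¹' Icc (-(bb n)) (bb n) then ((2:ℝ≥0∞)⁻¹)^k else 0)
      = ((2:ℝ≥0∞)⁻¹)^(n+1) * 2 := by
    rw [← tsum_tail (n+1)]
    refine tsum_congr fun k => ?_
    simp only [mem_preimage]
    by_cases h : n + 1 ≤ k
    · rw [if_pos (mem3.2 h), if_pos h]
    · rw [if_neg (fun hc => h (mem3.1 hc)), if_neg h]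
  rw [h1, pow_succ, mul_assoc, ENNReal.inv_mul_cancel (by norm_num) (by norm_num), mul_one]

lemma fμ_Icc2 (n : ℕ) : (Measure.map fex μex) (Icc (bb n * (1/2)) (bb n)) = 0 := by
  rw [Measure.map_apply fex_cont.measurable measurableSet_Icc,
    μex_apply (measurableSet_Icc.preimage fex_cont.measurable)]
  have h1 : ∀ k : ℕ, (if bb k ∈ fex ⁻¹' Icc (bb n * (1/2)) (bb n) then ((2:ℝ≥0∞)⁻¹)^k else 0)
      = 0 := fun k => if_neg mem4
  rw [tsum_congr h1, tsum_zero]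

lemma half_pow_ne_zero (n : ℕ) : ((2:ℝ≥0∞)⁻¹)^n ≠ 0 := by
  apply pow_ne_zero
  simp

lemma half_pow_ne_top (n : ℕ) : ((2:ℝ≥0∞)⁻¹)^n ≠ ∞ := by
  apply ENNReal.pow_ne_top
  simp [ENNReal.inv_ne_top]

/-! ### Scenery machinery -/

lemma window_eq (t : ℝ) : window 0 1 t = Icc (-(Real.exp (-t))) (Real.exp (-t)) := by
  simp [window]

def gmap (t : ℝ) : I01 → ℝ := fun a => 0 + Real.exp (-t) * (a : ℝ)

lemma gmap_inj (t : ℝ) : Function.Injective (gmap t) := by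
  intro a b h
  simp only [gmap, zero_add] at h
  exact Subtype.ext (mul_left_cancel₀ (Real.exp_ne_zero _) h)

lemma gmap_cont (t : ℝ) : Continuous (gmap t) :=
  continuous_const.add (continuous_const.mul continuous_subtype_val)

lemma gmap_emb (t : ℝ) : MeasurableEmbedding (gmap t) :=
  ((gmap_cont t).isClosedEmbedding (gmap_inj t)).measurableEmbedding

lemma sceneryMeasure_apply (μ : Measure ℝ) (t : ℝ) {S : Set I01} (hS : MeasurableSet S) :
    sceneryMeasure μ 0 t S = (μ (window 0 1 t))⁻¹ * μ (gmap t '' S) := by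
  show ((μ (window 0 1 t))⁻¹ • Measure.comap (gmap t) μ) S = _
  rw [Measure.smul_apply,
    Measure.comap_apply _ (gmap_inj t) (fun s hs => (gmap_emb t).measurableSet_image' hs) _ hS,
    smul_eq_mul]

lemma img_Ici (t r : ℝ) (hr : -1 ≤ r) :
    gmap t '' {a : I01 | r ≤ (a : ℝ)} = Icc (Real.exp (-t) * r) (Real.exp (-t)) := by
  have hc : (0:ℝ) < Real.exp (-t) := Real.exp_pos _
  ext x
  simp only [gmap, mem_image, mem_setOf_eq, mem_Icc, zero_add]
  constructor
  · rintro ⟨a, hra, rfl⟩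
    constructor
    · exact mul_le_mul_of_nonneg_left hra hc.le
    · calc Real.exp (-t) * (a:ℝ) ≤ Real.exp (-t) * 1 :=
        mul_le_mul_of_nonneg_left a.2.2 hc.le
      _ = Real.exp (-t) := mul_one _
  · rintro ⟨h1, h2⟩
    refine ⟨⟨x / Real.exp (-t), ?_, ?_⟩, ?_, ?_⟩
    · rw [le_div_iff₀ hc]
      nlinarith
    · rw [div_le_one hc]; exact h2
    · show r ≤ x / Real.exp (-t)
      rw [le_div_iff₀ hc]
      linarith [h1]
    · field_simp

lemma img_univ (t : ℝ) :
    gmap t '' (univ : Set I01) = Icc (-(Real.exp (-t))) (Real.exp (-t)) := by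
  have h : (univ : Set I01) = {a : I01 | -1 ≤ (a : ℝ)} :=
    (eq_univ_of_forall fun a => a.2.1).symm
  rw [h, img_Ici t (-1) le_rfl, mul_neg_one]

lemma scenery_prob (μ : Measure ℝ) (t : ℝ) (h0 : μ (window 0 1 t) ≠ 0)
    (hfin : μ (window 0 1 t) ≠ ∞) : IsProbabilityMeasure (sceneryMeasure μ 0 t) := by
  constructor
  rw [sceneryMeasure_apply μ t MeasurableSet.univ, img_univ, ← window_eq]
  exact ENNReal.inv_mul_cancel h0 hfin

lemma scenery_coe (μ : Measure ℝ) (x t : ℝ) (h : IsProbabilityMeasure (sceneryMeasure μ x t)) :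
    ((scenery μ x t : ProbabilityMeasure I01) : Measure I01) = sceneryMeasure μ x t := by
  unfold scenery
  erw [dif_pos h]
  rfl

/-! ### The test function -/

def φex : C(I01, ℝ) := ⟨fun a => max 0 (min 1 (4 * (a:ℝ) - 2)), by
  apply continuous_const.max
  exact continuous_const.min (by continuity)⟩

lemma φex_integrable (m : Measure I01) [IsFiniteMeasure m] :
    Integrable (fun a => φex a) m :=
  φex.continuous.integrable_of_hasCompactSupport ((isClosed_tsupport _).isCompact)

lemma φex_lower (m : Measure I01) [IsProbabilityMeasure m] :
    (m {a : I01 | 3/4 ≤ (a:ℝ)}).toReal ≤ ∫ a, φex a ∂m := by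
  have hA : MeasurableSet {a : I01 | 3/4 ≤ (a:ℝ)} :=
    continuous_subtype_val.measurable measurableSet_Ici
  have h1 : ∫ a, Set.indicator {a : I01 | 3/4 ≤ (a:ℝ)} (fun _ => (1:ℝ)) a ∂m
      = (m {a : I01 | 3/4 ≤ (a:ℝ)}).toReal := by
    rw [integral_indicator_const (1:ℝ) hA, smul_eq_mul, mul_one]; rfl
  rw [← h1]
  apply integral_mono ((integrable_const (1:ℝ)).indicator hA) (φex_integrable m)
  intro a
  rw [Set.indicator_apply]
  by_cases h : a ∈ {a : I01 | 3/4 ≤ (a:ℝ)}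
  · rw [if_pos h]
    have : (3:ℝ)/4 ≤ (a:ℝ) := h
    exact le_max_of_le_right (le_min le_rfl (by linarith))
  · rw [if_neg h]
    exact le_max_left _ _

lemma φex_upper (m : Measure I01) (hB : m {a : I01 | 1/2 ≤ (a:ℝ)} = 0) :
    ∫ a, φex a ∂m = 0 := by
  apply integral_eq_zero_of_ae
  rw [Filter.EventuallyEq, ae_iff]
  refine measure_mono_null ?_ hB
  intro a ha
  simp only [mem_setOf_eq] at ha ⊢
  by_contra hlt
  push_neg at hlt
  apply ha
  show max 0 (min 1 (4 * (a:ℝ) - 2)) = 0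
  have : min 1 (4 * (a:ℝ) - 2) ≤ 0 := le_trans (min_le_right _ _) (by linarith)
  simpa using max_eq_left this

/-! ### Values of the sceneries at times `t = 4ⁿ` -/

lemma exp_pow (n : ℕ) : Real.exp (-(4:ℝ)^n) = bb n := rfl

lemma μex_window (n : ℕ) : μex (window 0 1 ((4:ℝ)^n)) = ((2:ℝ≥0∞)⁻¹)^n * 2 := by
  rw [window_eq, exp_pow, μex_Icc1]

lemma fμ_window (n : ℕ) : (Measure.map fex μex) (window 0 1 ((4:ℝ)^n)) = ((2:ℝ≥0∞)⁻¹)^n := by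
  rw [window_eq, exp_pow, fμ_Icc1]

lemma sceneryA (n : ℕ) :
    sceneryMeasure μex 0 ((4:ℝ)^n) {a : I01 | 3/4 ≤ (a:ℝ)} = 2⁻¹ := by
  have hA : MeasurableSet {a : I01 | 3/4 ≤ (a:ℝ)} :=
    continuous_subtype_val.measurable measurableSet_Ici
  rw [sceneryMeasure_apply _ _ hA, img_Ici _ (3/4) (by norm_num), exp_pow, μex_Icc2,
    μex_window]
  set a := ((2:ℝ≥0∞)⁻¹)^n with ha
  rw [ENNReal.mul_inv (Or.inl (half_pow_ne_zero n)) (Or.inl (half_pow_ne_top n))]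
  calc a⁻¹ * 2⁻¹ * a = (a⁻¹ * a) * 2⁻¹ := by ring
  _ = 2⁻¹ := by rw [ENNReal.inv_mul_cancel (half_pow_ne_zero n) (half_pow_ne_top n), one_mul]

lemma sceneryB (n : ℕ) :
    sceneryMeasure (Measure.map fex μex) 0 ((4:ℝ)^n) {a : I01 | 1/2 ≤ (a:ℝ)} = 0 := by
  have hB : MeasurableSet {a : I01 | 1/2 ≤ (a:ℝ)} :=
    continuous_subtype_val.measurable measurableSet_Ici
  rw [sceneryMeasure_apply _ _ hB, img_Ici _ (1/2) (by norm_num), exp_pow, fμ_Icc2, mul_zero]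

lemma probA (n : ℕ) : IsProbabilityMeasure (sceneryMeasure μex 0 ((4:ℝ)^n)) := by
  apply scenery_prob
  · rw [μex_window]
    exact mul_ne_zero (half_pow_ne_zero n) (by norm_num)
  · rw [μex_window]
    exact ENNReal.mul_ne_top (half_pow_ne_top n) (by norm_num)

lemma probB (n : ℕ) : IsProbabilityMeasure (sceneryMeasure (Measure.map fex μex) 0 ((4:ℝ)^n)) := by
  apply scenery_prob
  · rw [fμ_window]
    exact half_pow_ne_zero n
  · rw [fμ_window]
    exact half_pow_ne_top n

/-! ### Global properties of `μex` -/

lemma μex_finite : IsFiniteMeasure μex := by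
  constructor
  rw [μex_apply MeasurableSet.univ]
  simp only [mem_univ, if_true]
  rw [ENNReal.tsum_geometric, ENNReal.one_sub_inv_two, inv_inv]
  exact ENNReal.ofNat_lt_top

lemma μex_memSupp : MemSupp μex 0 := by
  intro ε hε
  obtain ⟨k, hk⟩ : ∃ k : ℕ, (1/2:ℝ)^k < ε := exists_pow_lt_of_lt_one hε (by norm_num)
  have hbk : bb k < ε := by
    have h0 : k < 4^k := Nat.lt_pow_self (by norm_num)
    have h1 : (k:ℝ) ≤ (4:ℝ)^k := by exact_mod_cast h0.le
    have h2 : bb k ≤ Real.exp (-(k:ℝ)) := Real.exp_le_exp.2 (by linarith)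
    have h3 : Real.exp (-(k:ℝ)) = Real.exp (-1) ^ k := by
      rw [← Real.exp_nat_mul]
      congr 1
      ring
    have h4 : Real.exp (-1) ≤ 1/2 := by
      rw [Real.exp_neg, inv_le_comm₀ (Real.exp_pos 1) (by norm_num)]
      calc (1/2:ℝ)⁻¹ = 2 := by norm_num
      _ ≤ Real.exp 1 := by linarith [Real.add_one_le_exp 1]
    have h5 : Real.exp (-1) ^ k ≤ (1/2:ℝ)^k :=
      pow_le_pow_left₀ (Real.exp_pos _).le h4 k
    calc bb k ≤ Real.exp (-(k:ℝ)) := h2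
    _ = Real.exp (-1) ^ k := h3
    _ ≤ (1/2:ℝ)^k := h5
    _ < ε := hk
  have hmem : bb k ∈ Ioo (0 - ε) (0 + ε) := by
    constructor
    · have := bb_pos k; linarith
    · have := bb_pos k; linarith
  rw [μex_apply measurableSet_Ioo]
  refine lt_of_lt_of_le ?_ (ENNReal.le_tsum k)
  rw [if_pos hmem]
  exact pos_iff_ne_zero.2 (half_pow_ne_zero k)

end SceneryEx

/-- Example 1: there are a Radon measure `μ` with `0 ∈ supp μ` and an
orientation-preserving `C¹` diffeomorphism `f` with `f(0) = 0`, `f'(0) = 1` such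
that the sceneries `μ_{0,t}` and `(fμ)_{0,t}` are not asymptotic. -/


theorem exists_sceneries_not_asymptotic :
    ∃ μ : Measure ℝ, IsLocallyFiniteMeasure μ ∧ MemSupp μ 0 ∧
      ∃ f : ℝ → ℝ, IsOPDiffeo f ∧ f 0 = 0 ∧ deriv f 0 = 1 ∧
        ¬ (∀ φ : C(I01, ℝ),
            Tendsto (fun t : ℝ => (∫ a, φ a ∂(scenery μ 0 t : Measure I01)) -
                ∫ a, φ a ∂(scenery (Measure.map f μ) 0 t : Measure I01))
              atTop (𝓝 0)) := by
  haveI := SceneryEx.μex_finite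
  refine ⟨SceneryEx.μex, inferInstance, SceneryEx.μex_memSupp, SceneryEx.fex,
    ⟨SceneryEx.fex_contDiff, SceneryEx.fex_bij, SceneryEx.fex_deriv_pos⟩,
    SceneryEx.fex_zero, SceneryEx.fex_deriv_zero, ?_⟩
  intro H
  have h := H SceneryEx.φex
  have htt : Tendsto (fun n : ℕ => (4:ℝ)^n) atTop atTop :=
    tendsto_pow_atTop_atTop_of_one_lt (by norm_num)
  have hcomp := h.comp htt
  have hev := hcomp.eventually (gt_mem_nhds (show (0:ℝ) < 1/2 by norm_num))
  obtain ⟨n, hn⟩ := hev.exists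
  simp only [Function.comp] at hn
  have e1 : ((scenery SceneryEx.μex 0 ((4:ℝ)^n) : ProbabilityMeasure I01) : Measure I01)
      = sceneryMeasure SceneryEx.μex 0 ((4:ℝ)^n) :=
    SceneryEx.scenery_coe _ _ _ (SceneryEx.probA n)
  have e2 : ((scenery (Measure.map SceneryEx.fex SceneryEx.μex) 0 ((4:ℝ)^n) :
        ProbabilityMeasure I01) : Measure I01)
      = sceneryMeasure (Measure.map SceneryEx.fex SceneryEx.μex) 0 ((4:ℝ)^n) :=
    SceneryEx.scenery_coe _ _ _ (SceneryEx.probB n)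
  rw [e1, e2] at hn
  haveI := SceneryEx.probA n
  haveI := SceneryEx.probB n
  have hlow := SceneryEx.φex_lower (sceneryMeasure SceneryEx.μex 0 ((4:ℝ)^n))
  rw [SceneryEx.sceneryA n] at hlow
  have htr : ((2:ℝ≥0∞)⁻¹).toReal = 1/2 := by
    rw [ENNReal.toReal_inv]
    norm_num
  rw [htr] at hlow
  have hup := SceneryEx.φex_upper _ (SceneryEx.sceneryB n)
  rw [hup] at hn
  linarith
end
end

section
/- Let μ be the measure on ℝ with density g(x) = x^{−2}·e^{−1/|x|} for x ≠ 0 (and g(0) = 0) with respect to Lebesgue measure, so that μ([0,x]) = μ([−x,0]) = e^{−1/x} for x > 0. Then 0 ∈ supp μ and lim_{t→∞} μ_{0,t} = (1/2)(δ_{−1} + δ_1) in the weak-* topology. -/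
open MeasureTheory Filter Topology Set
open scoped ENNReal NNReal

noncomputable section

/-- The density `g(x) = x⁻²·e^{-1/|x|}` (with `g(0) = 0`). -/
def gdens (x : ℝ) : ℝ≥0∞ :=
  if x = 0 then 0 else ENNReal.ofReal ((x ^ 2)⁻¹ * Real.exp (-(1 / |x|)))


namespace SceneryAux

/-- real version of the density -/
def hfn (x : ℝ) : ℝ := if x = 0 then 0 else (x ^ 2)⁻¹ * Real.exp (-(1 / |x|))

/-- antiderivative on `[0,∞)` -/
def Hfn (x : ℝ) : ℝ := if x = 0 then 0 else Real.exp (-(1 / x))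

lemma gdens_eq (x : ℝ) : gdens x = ENNReal.ofReal (hfn x) := by
  unfold gdens hfn; split <;> simp

lemma hfn_nonneg (x : ℝ) : 0 ≤ hfn x := by
  unfold hfn; split
  · exact le_refl 0
  · positivity

lemma sq_le_four_mul_exp {u : ℝ} (hu : 0 ≤ u) : u ^ 2 ≤ 4 * Real.exp u := by
  have h1 : u / 2 ≤ Real.exp (u / 2) := by linarith [Real.add_one_le_exp (u / 2)]
  have h2 : Real.exp (u / 2) * Real.exp (u / 2) = Real.exp u := by
    rw [← Real.exp_add]; ring_nf
  nlinarith [Real.exp_pos (u / 2)]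

lemma exp_neg_le {x : ℝ} (hx : 0 < x) : Real.exp (-(1 / x)) ≤ 4 * x ^ 2 := by
  have hu : (0:ℝ) ≤ 1 / x := by positivity
  have h1 : (1 / x) ^ 2 ≤ 4 * Real.exp (1 / x) := sq_le_four_mul_exp hu
  have h2 : Real.exp (-(1 / x)) * Real.exp (1 / x) = 1 := by
    rw [← Real.exp_add]; simp
  have hx2 : (0:ℝ) < x ^ 2 := by positivity
  have h3 : (1 / x) ^ 2 * x ^ 2 = 1 := by field_simp
  nlinarith [Real.exp_pos (1 / x), Real.exp_pos (-(1 / x))]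

lemma hfn_le_four (x : ℝ) : hfn x ≤ 4 := by
  unfold hfn; split
  · norm_num
  · rename_i hx
    have hax : 0 < |x| := abs_pos.mpr hx
    have h1 : Real.exp (-(1 / |x|)) ≤ 4 * |x| ^ 2 := exp_neg_le hax
    have h2 : |x| ^ 2 = x ^ 2 := sq_abs x
    have hx2 : (0:ℝ) < x ^ 2 := by positivity
    rw [h2] at h1
    calc (x ^ 2)⁻¹ * Real.exp (-(1 / |x|)) ≤ (x ^ 2)⁻¹ * (4 * x ^ 2) := by
          exact mul_le_mul_of_nonneg_left h1 (by positivity)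
      _ = 4 := by field_simp

lemma hfn_even (x : ℝ) : hfn (-x) = hfn x := by
  unfold hfn; simp [neg_eq_zero]

lemma measurable_hfn : Measurable hfn := by
  unfold hfn
  apply Measurable.ite (measurableSet_singleton 0)
  · exact measurable_const
  · fun_prop

lemma Hfn_zero : Hfn 0 = 0 := by simp [Hfn]

lemma Hfn_pos {x : ℝ} (hx : x ≠ 0) : 0 < Hfn x := by
  simp [Hfn, hx, Real.exp_pos]

lemma Hfn_nonneg (x : ℝ) : 0 ≤ Hfn x := by
  unfold Hfn; split
  · exact le_refl 0
  · positivity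

lemma Hfn_le {x : ℝ} (hx : 0 ≤ x) : Hfn x ≤ 4 * x ^ 2 := by
  unfold Hfn; split
  · positivity
  · rename_i h; exact exp_neg_le (lt_of_le_of_ne hx (Ne.symm h))

lemma Hfn_mono {a b : ℝ} (ha : 0 < a) (hab : a ≤ b) : Hfn a ≤ Hfn b := by
  have hb : 0 < b := lt_of_lt_of_le ha hab
  simp only [Hfn, ha.ne', hb.ne', if_false]
  apply Real.exp_le_exp.2
  have : 1 / b ≤ 1 / a := one_div_le_one_div_of_le ha hab
  linarith

lemma Hfn_strictMono {a b : ℝ} (ha : 0 < a) (hab : a < b) : Hfn a < Hfn b := by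
  have hb : 0 < b := lt_trans ha hab
  simp only [Hfn, ha.ne', hb.ne', if_false]
  apply Real.exp_lt_exp.2
  have : 1 / b < 1 / a := one_div_lt_one_div_of_lt ha hab
  linarith

lemma intervalIntegrable_hfn (a b : ℝ) : IntervalIntegrable hfn volume a b := by
  apply IntervalIntegrable.mono_fun' (g := fun _ => (4:ℝ)) intervalIntegrable_const
  · exact measurable_hfn.aestronglyMeasurable
  · filter_upwards with y
    rw [Real.norm_eq_abs, abs_of_nonneg (hfn_nonneg y)]
    exact hfn_le_four y

lemma ftc_hfn {a b : ℝ} (ha : 0 ≤ a) (hab : a ≤ b) :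
    ∫ x in a..b, hfn x = Hfn b - Hfn a := by
  apply intervalIntegral.integral_eq_sub_of_hasDeriv_right_of_le hab
  · intro x hx
    rcases eq_or_lt_of_le (le_trans ha hx.1) with h0 | h0
    · have hx0 : x = 0 := h0.symm
      subst hx0
      have h1 : Tendsto Hfn (𝓝[Icc a b] 0) (𝓝 0) := by
        apply squeeze_zero' (Eventually.of_forall fun y => Hfn_nonneg y)
        · filter_upwards [self_mem_nhdsWithin] with y hy
          exact Hfn_le (le_trans ha hy.1)
        · have : Tendsto (fun y : ℝ => 4 * y ^ 2) (𝓝 0) (𝓝 (4 * 0 ^ 2)) := by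
            exact (continuous_const.mul (continuous_pow 2)).tendsto 0
          simpa using this.mono_left nhdsWithin_le_nhds
      simpa [ContinuousWithinAt, Hfn_zero] using h1
    · apply ContinuousAt.continuousWithinAt
      have he : (fun y : ℝ => Real.exp (-(1 / y))) =ᶠ[𝓝 x] Hfn := by
        filter_upwards [eventually_ne_nhds h0.ne'] with y hy
        simp [Hfn, hy]
      apply ContinuousAt.congr _ he
      have : ContinuousAt (fun y : ℝ => -(1 / y)) x :=
        ((continuousAt_const.div continuousAt_id h0.ne').neg)
      exact Real.continuous_exp.continuousAt.comp this
  · intro x hx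
    have h0 : 0 < x := lt_of_le_of_lt ha hx.1
    have h1 : HasDerivAt (fun y : ℝ => -(1 / y)) ((x ^ 2)⁻¹) x := by
      have := (hasDerivAt_inv h0.ne').fun_neg
      simpa [one_div] using this
    have h2 := h1.exp
    have he : (fun y : ℝ => Real.exp (-(1 / y))) =ᶠ[𝓝 x] Hfn := by
      filter_upwards [eventually_ne_nhds h0.ne'] with y hy
      simp [Hfn, hy]
    have h3 : HasDerivAt Hfn (Real.exp (-(1 / x)) * (x ^ 2)⁻¹) x :=
      h2.congr_of_eventuallyEq he.symm
    have hv : hfn x = Real.exp (-(1 / x)) * (x ^ 2)⁻¹ := by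
      simp only [hfn, h0.ne', if_false, abs_of_pos h0]; ring
    rw [hv]
    exact h3.hasDerivWithinAt
  · exact intervalIntegrable_hfn a b

/-- the measure of Example 3 -/
abbrev mu0 : Measure ℝ := volume.withDensity gdens

lemma mu0_Ioc {a b : ℝ} (ha : 0 ≤ a) (hab : a ≤ b) :
    mu0 (Ioc a b) = ENNReal.ofReal (Hfn b - Hfn a) := by
  rw [withDensity_apply _ measurableSet_Ioc]
  simp only [gdens_eq]
  rw [← ofReal_integral_eq_lintegral_ofReal]
  · rw [← intervalIntegral.integral_of_le hab, ftc_hfn ha hab]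
  · have := intervalIntegrable_hfn a b
    rw [intervalIntegrable_iff, uIoc_of_le hab] at this
    exact this
  · exact ae_of_all _ hfn_nonneg

lemma mu0_Ioc_neg {a b : ℝ} (ha : 0 ≤ a) (hab : a ≤ b) :
    mu0 (Ioc (-b) (-a)) = ENNReal.ofReal (Hfn b - Hfn a) := by
  rw [withDensity_apply _ measurableSet_Ioc]
  simp only [gdens_eq]
  rw [← ofReal_integral_eq_lintegral_ofReal]
  · have h1 : ∫ x in Ioc (-b) (-a), hfn x = ∫ x in (-b)..(-a), hfn x :=
      (intervalIntegral.integral_of_le (neg_le_neg hab)).symm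
    have h2 : ∫ x in (-b)..(-a), hfn x = ∫ x in a..b, hfn (-x) := by
      rw [intervalIntegral.integral_comp_neg hfn]
    have h3 : ∫ x in a..b, hfn (-x) = ∫ x in a..b, hfn x := by
      simp only [hfn_even]
    rw [h1, h2, h3, ftc_hfn ha hab]
  · have := intervalIntegrable_hfn (-b) (-a)
    rw [intervalIntegrable_iff, uIoc_of_le (neg_le_neg hab)] at this
    exact this
  · exact ae_of_all _ hfn_nonneg

lemma mu0_singleton (x : ℝ) : mu0 {x} = 0 :=
  (withDensity_absolutelyContinuous volume gdens) (Real.volume_singleton)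

lemma mu0_Icc_eq_Ioc {a b : ℝ} (hab : a ≤ b) : mu0 (Icc a b) = mu0 (Ioc a b) := by
  apply le_antisymm
  · calc mu0 (Icc a b) = mu0 ({a} ∪ Ioc a b) := by
          rw [Set.singleton_union, Set.Ioc_insert_left hab]
      _ ≤ mu0 {a} + mu0 (Ioc a b) := measure_union_le _ _
      _ = mu0 (Ioc a b) := by rw [mu0_singleton, zero_add]
  · exact measure_mono Set.Ioc_subset_Icc_self

lemma mu0_Icc_pos {a b : ℝ} (ha : 0 ≤ a) (hab : a ≤ b) :
    mu0 (Icc a b) = ENNReal.ofReal (Hfn b - Hfn a) := by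
  rw [mu0_Icc_eq_Ioc hab, mu0_Ioc ha hab]

lemma mu0_Icc_neg {a b : ℝ} (ha : 0 ≤ a) (hab : a ≤ b) :
    mu0 (Icc (-b) (-a)) = ENNReal.ofReal (Hfn b - Hfn a) := by
  rw [mu0_Icc_eq_Ioc (neg_le_neg hab), mu0_Ioc_neg ha hab]

lemma mu0_Icc_sym {r : ℝ} (hr : 0 ≤ r) :
    mu0 (Icc (-r) r) = ENNReal.ofReal (2 * Hfn r) := by
  have h2 : Ioc (-r) r = Ioc (-r) 0 ∪ Ioc 0 r :=
    (Set.Ioc_union_Ioc_eq_Ioc (by linarith) hr).symm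
  have h3 : mu0 (Ioc (-r) r) = mu0 (Ioc (-r) 0) + mu0 (Ioc 0 r) := by
    rw [h2]
    exact measure_union (Set.Ioc_disjoint_Ioc_of_le le_rfl) measurableSet_Ioc
  have h4 : mu0 (Ioc (-r) 0) = ENNReal.ofReal (Hfn r - Hfn 0) := by
    have := mu0_Ioc_neg (le_refl (0:ℝ)) hr
    rwa [neg_zero] at this
  have h5 : mu0 (Ioc 0 r) = ENNReal.ofReal (Hfn r - Hfn 0) := mu0_Ioc (le_refl 0) hr
  calc mu0 (Icc (-r) r) = mu0 (Ioc (-r) r) := mu0_Icc_eq_Ioc (by linarith)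
    _ = ENNReal.ofReal (Hfn r - Hfn 0) + ENNReal.ofReal (Hfn r - Hfn 0) := by
        rw [h3, h4, h5]
    _ = ENNReal.ofReal (2 * Hfn r) := by
        rw [← ENNReal.ofReal_add (by rw [Hfn_zero]; simpa using Hfn_nonneg r)
          (by rw [Hfn_zero]; simpa using Hfn_nonneg r)]
        rw [Hfn_zero]; ring_nf

-- the embedding
lemma scenery_emb (t : ℝ) :
    MeasurableEmbedding (fun a : I01 => (0:ℝ) + Real.exp (-t) * (a : ℝ)) := by
  apply Measurable.measurableEmbedding
  · exact measurable_const.add (measurable_const.mul measurable_subtype_coe)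
  · intro a b h
    simp only [add_right_inj] at h
    exact Subtype.ext (mul_left_cancel₀ (Real.exp_ne_zero _) h)

lemma window_eq (t : ℝ) : window 0 1 t = Icc (-(Real.exp (-t))) (Real.exp (-t)) := by
  unfold window; norm_num

lemma image_univ_eq (t : ℝ) :
    (fun a : I01 => (0:ℝ) + Real.exp (-t) * (a : ℝ)) '' univ
      = Icc (-(Real.exp (-t))) (Real.exp (-t)) := by
  set r := Real.exp (-t) with hr
  have hr0 : 0 < r := Real.exp_pos _
  ext y
  simp only [Set.image_univ, Set.mem_range, Set.mem_Icc]
  constructor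
  · rintro ⟨⟨a, ha1, ha2⟩, rfl⟩
    constructor <;> nlinarith
  · rintro ⟨h1, h2⟩
    refine ⟨⟨y / r, ?_, ?_⟩, ?_⟩
    · rw [le_div_iff₀ hr0]; linarith
    · rw [div_le_one hr0]; linarith
    · field_simp; simp

lemma image_plus (t ε : ℝ) (hε1 : ε ≤ 2) :
    (fun a : I01 => (0:ℝ) + Real.exp (-t) * (a : ℝ)) '' {a : I01 | 1 - ε ≤ (a : ℝ)}
      = Icc (Real.exp (-t) * (1 - ε)) (Real.exp (-t)) := by
  set r := Real.exp (-t) with hr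
  have hr0 : 0 < r := Real.exp_pos _
  ext y
  simp only [Set.mem_image, Set.mem_setOf_eq, Set.mem_Icc]
  constructor
  · rintro ⟨⟨a, ha1, ha2⟩, ha3, rfl⟩
    constructor <;> · simp only [zero_add]; nlinarith
  · rintro ⟨h1, h2⟩
    refine ⟨⟨y / r, ?_, ?_⟩, ?_, ?_⟩
    · rw [le_div_iff₀ hr0]; nlinarith
    · rw [div_le_one hr0]; linarith
    · show 1 - ε ≤ y / r
      rw [le_div_iff₀ hr0]; nlinarith
    · field_simp; simp

lemma image_minus (t ε : ℝ) (hε1 : ε ≤ 2) :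
    (fun a : I01 => (0:ℝ) + Real.exp (-t) * (a : ℝ)) '' {a : I01 | (a : ℝ) ≤ -(1 - ε)}
      = Icc (-(Real.exp (-t))) (-(Real.exp (-t) * (1 - ε))) := by
  set r := Real.exp (-t) with hr
  have hr0 : 0 < r := Real.exp_pos _
  ext y
  simp only [Set.mem_image, Set.mem_setOf_eq, Set.mem_Icc]
  constructor
  · rintro ⟨⟨a, ha1, ha2⟩, ha3, rfl⟩
    simp only [Set.mem_setOf_eq] at ha3
    constructor <;> · simp only [zero_add]; nlinarith
  · rintro ⟨h1, h2⟩
    refine ⟨⟨y / r, ?_, ?_⟩, ?_, ?_⟩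
    · rw [le_div_iff₀ hr0]; linarith
    · rw [div_le_one hr0]; nlinarith
    · show y / r ≤ -(1 - ε)
      rw [div_le_iff₀ hr0]; nlinarith
    · field_simp; simp

lemma mu0_window (t : ℝ) :
    mu0 (window 0 1 t) = ENNReal.ofReal (2 * Hfn (Real.exp (-t))) := by
  rw [window_eq, mu0_Icc_sym (Real.exp_pos _).le]

lemma mu0_window_ne_zero (t : ℝ) : mu0 (window 0 1 t) ≠ 0 := by
  rw [mu0_window]
  simp only [ne_eq, ENNReal.ofReal_eq_zero, not_le]
  have := Hfn_pos (Real.exp_ne_zero (-t))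
  linarith

lemma mu0_window_ne_top (t : ℝ) : mu0 (window 0 1 t) ≠ ⊤ := by
  rw [mu0_window]; exact ENNReal.ofReal_ne_top

lemma sceneryMeasure_apply (t : ℝ) (s : Set I01) :
    sceneryMeasure mu0 0 t s
      = (mu0 (window 0 1 t))⁻¹
        * mu0 ((fun a : I01 => (0:ℝ) + Real.exp (-t) * (a : ℝ)) '' s) := by
  unfold sceneryMeasure
  rw [Measure.smul_apply, smul_eq_mul, (scenery_emb t).comap_apply]

lemma sceneryMeasure_isProb (t : ℝ) : IsProbabilityMeasure (sceneryMeasure mu0 0 t) := by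
  constructor
  rw [sceneryMeasure_apply, image_univ_eq, ← window_eq]
  exact ENNReal.inv_mul_cancel (mu0_window_ne_zero t) (mu0_window_ne_top t)

lemma scenery_coe (t : ℝ) :
    ((scenery mu0 0 t : ProbabilityMeasure I01) : Measure I01) = sceneryMeasure mu0 0 t := by
  unfold scenery
  exact congrArg (fun P : ProbabilityMeasure I01 => (P : Measure I01)) (dif_pos (sceneryMeasure_isProb t))

lemma sceneryMeasure_apply' (t : ℝ) (s : Set I01) :
    sceneryMeasure mu0 0 t s
      = (ENNReal.ofReal (2 * Hfn (Real.exp (-t))))⁻¹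
        * mu0 ((fun a : I01 => (0:ℝ) + Real.exp (-t) * (a : ℝ)) '' s) := by
  rw [sceneryMeasure_apply, mu0_window]

lemma scenery_plus_toReal (t ε : ℝ) (hε0 : 0 < ε) (hε1 : ε < 1) :
    (sceneryMeasure mu0 0 t {a : I01 | 1 - ε ≤ (a : ℝ)}).toReal
      = (1 - Hfn (Real.exp (-t) * (1 - ε)) / Hfn (Real.exp (-t))) / 2 := by
  set r := Real.exp (-t) with hrdef
  have hr0 : 0 < r := Real.exp_pos _
  have h1ε : 0 < 1 - ε := by linarith
  have hrε : 0 < r * (1 - ε) := by positivity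
  have hle : r * (1 - ε) ≤ r := by nlinarith
  have hm : mu0 (Icc (r * (1 - ε)) r) = ENNReal.ofReal (Hfn r - Hfn (r * (1 - ε))) :=
    mu0_Icc_pos hrε.le hle
  rw [sceneryMeasure_apply', image_plus t ε (by linarith), hm]
  rw [ENNReal.toReal_mul, ENNReal.toReal_inv,
    ENNReal.toReal_ofReal (by linarith [Hfn_nonneg r] : (0:ℝ) ≤ 2 * Hfn r),
    ENNReal.toReal_ofReal (by linarith [Hfn_mono hrε hle] : (0:ℝ) ≤ Hfn r - Hfn (r * (1 - ε)))]
  have hH : Hfn r ≠ 0 := (Hfn_pos hr0.ne').ne'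
  field_simp [hH]

lemma scenery_minus_toReal (t ε : ℝ) (hε0 : 0 < ε) (hε1 : ε < 1) :
    (sceneryMeasure mu0 0 t {a : I01 | (a : ℝ) ≤ -(1 - ε)}).toReal
      = (1 - Hfn (Real.exp (-t) * (1 - ε)) / Hfn (Real.exp (-t))) / 2 := by
  set r := Real.exp (-t) with hrdef
  have hr0 : 0 < r := Real.exp_pos _
  have h1ε : 0 < 1 - ε := by linarith
  have hrε : 0 < r * (1 - ε) := by positivity
  have hle : r * (1 - ε) ≤ r := by nlinarith
  have hm : mu0 (Icc (-r) (-(r * (1 - ε)))) = ENNReal.ofReal (Hfn r - Hfn (r * (1 - ε))) :=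
    mu0_Icc_neg hrε.le hle
  rw [sceneryMeasure_apply', image_minus t ε (by linarith), hm]
  rw [ENNReal.toReal_mul, ENNReal.toReal_inv,
    ENNReal.toReal_ofReal (by linarith [Hfn_nonneg r] : (0:ℝ) ≤ 2 * Hfn r),
    ENNReal.toReal_ofReal (by linarith [Hfn_mono hrε hle] : (0:ℝ) ≤ Hfn r - Hfn (r * (1 - ε)))]
  have hH : Hfn r ≠ 0 := (Hfn_pos hr0.ne').ne'
  field_simp [hH]

lemma q_eq (t ε : ℝ) (hε1 : ε < 1) :
    Hfn (Real.exp (-t) * (1 - ε)) / Hfn (Real.exp (-t))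
      = Real.exp (Real.exp t * (1 - (1 - ε)⁻¹)) := by
  have h1ε : 0 < 1 - ε := by linarith
  have hr0 : 0 < Real.exp (-t) := Real.exp_pos _
  have h1 : Real.exp (-t) * (1 - ε) ≠ 0 := by positivity
  simp only [Hfn, h1, hr0.ne', if_false]
  rw [← Real.exp_sub]
  congr 1
  rw [Real.exp_neg]
  field_simp
  ring

lemma q_nonneg (t ε : ℝ) :
    0 ≤ Hfn (Real.exp (-t) * (1 - ε)) / Hfn (Real.exp (-t)) :=
  div_nonneg (Hfn_nonneg _) (Hfn_nonneg _)

lemma q_le_one (t ε : ℝ) (hε0 : 0 < ε) (hε1 : ε < 1) :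
    Hfn (Real.exp (-t) * (1 - ε)) / Hfn (Real.exp (-t)) ≤ 1 := by
  have hr0 : 0 < Real.exp (-t) := Real.exp_pos _
  have h1ε : 0 < 1 - ε := by linarith
  apply div_le_one_of_le₀
  · exact Hfn_mono (by positivity) (by nlinarith)
  · exact Hfn_nonneg _

lemma measurableSet_plus (ε : ℝ) : MeasurableSet {a : I01 | 1 - ε ≤ (a : ℝ)} :=
  measurable_subtype_coe measurableSet_Ici

lemma measurableSet_minus (ε : ℝ) : MeasurableSet {a : I01 | (a : ℝ) ≤ -(1 - ε)} :=
  measurable_subtype_coe measurableSet_Iic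

lemma scenery_mid_toReal (t ε : ℝ) (hε0 : 0 < ε) (hε1 : ε < 1) :
    (sceneryMeasure mu0 0 t
        (({a : I01 | 1 - ε ≤ (a : ℝ)} ∪ {a : I01 | (a : ℝ) ≤ -(1 - ε)})ᶜ)).toReal
      = Hfn (Real.exp (-t) * (1 - ε)) / Hfn (Real.exp (-t)) := by
  haveI := sceneryMeasure_isProb t
  set q := Hfn (Real.exp (-t) * (1 - ε)) / Hfn (Real.exp (-t)) with hq
  have hq1 : q ≤ 1 := q_le_one t ε hε0 hε1
  have hdisj : Disjoint {a : I01 | 1 - ε ≤ (a : ℝ)} {a : I01 | (a : ℝ) ≤ -(1 - ε)} := by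
    rw [Set.disjoint_left]
    rintro a h1 h2
    simp only [Set.mem_setOf_eq] at h1 h2
    linarith
  have hA : MeasurableSet ({a : I01 | 1 - ε ≤ (a : ℝ)} ∪ {a : I01 | (a : ℝ) ≤ -(1 - ε)}) :=
    (measurableSet_plus ε).union (measurableSet_minus ε)
  have hu : sceneryMeasure mu0 0 t
        ({a : I01 | 1 - ε ≤ (a : ℝ)} ∪ {a : I01 | (a : ℝ) ≤ -(1 - ε)})
      = sceneryMeasure mu0 0 t {a : I01 | 1 - ε ≤ (a : ℝ)}
        + sceneryMeasure mu0 0 t {a : I01 | (a : ℝ) ≤ -(1 - ε)} :=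
    measure_union hdisj (measurableSet_minus ε)
  have hut : (sceneryMeasure mu0 0 t
        ({a : I01 | 1 - ε ≤ (a : ℝ)} ∪ {a : I01 | (a : ℝ) ≤ -(1 - ε)})).toReal
      = 1 - q := by
    rw [hu, ENNReal.toReal_add (measure_ne_top _ _) (measure_ne_top _ _),
      scenery_plus_toReal t ε hε0 hε1, scenery_minus_toReal t ε hε0 hε1]
    ring
  rw [prob_compl_eq_one_sub hA,
    ENNReal.toReal_sub_of_le prob_le_one ENNReal.one_ne_top, hut]
  norm_num

lemma key_bound (φ : C(I01, ℝ)) (ε δ : ℝ) (hε0 : 0 < ε) (hε1 : ε < 1) (hδ : 0 ≤ δ)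
    (hosc1 : ∀ a : I01, 1 - ε ≤ (a : ℝ) → |φ a - φ ⟨1, by norm_num⟩| ≤ δ)
    (hosc2 : ∀ a : I01, (a : ℝ) ≤ -(1 - ε) → |φ a - φ ⟨-1, by norm_num⟩| ≤ δ)
    (t : ℝ) :
    |(∫ a, φ a ∂(sceneryMeasure mu0 0 t)) - (φ ⟨-1, by norm_num⟩ + φ ⟨1, by norm_num⟩) / 2|
      ≤ δ + 2 * ‖φ‖ * (Hfn (Real.exp (-t) * (1 - ε)) / Hfn (Real.exp (-t))) := by
  haveI := sceneryMeasure_isProb t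
  set P := sceneryMeasure mu0 0 t with hPdef
  set q := Hfn (Real.exp (-t) * (1 - ε)) / Hfn (Real.exp (-t)) with hqdef
  have hq0 : 0 ≤ q := q_nonneg t ε
  have hq1 : q ≤ 1 := q_le_one t ε hε0 hε1
  set Sp := {a : I01 | 1 - ε ≤ (a : ℝ)} with hSp
  set Sm := {a : I01 | (a : ℝ) ≤ -(1 - ε)} with hSm
  set φ1 := φ ⟨1, by norm_num⟩ with hφ1
  set φm1 := φ ⟨-1, by norm_num⟩ with hφm1
  have hφ0 : (0:ℝ) ≤ ‖φ‖ := norm_nonneg φ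
  have hφ1b : |φ1| ≤ ‖φ‖ := by
    rw [← Real.norm_eq_abs]; exact φ.norm_coe_le_norm _
  have hφm1b : |φm1| ≤ ‖φ‖ := by
    rw [← Real.norm_eq_abs]; exact φ.norm_coe_le_norm _
  have hint : Integrable (fun a => φ a) P := by
    refine Integrable.mono' (integrable_const ‖φ‖) φ.continuous.aestronglyMeasurable
      (ae_of_all _ fun a => φ.norm_coe_le_norm a)
  have hdisj : Disjoint Sp Sm := by
    rw [Set.disjoint_left]
    rintro a h1 h2
    simp only [hSp, hSm, Set.mem_setOf_eq] at h1 h2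
    linarith
  have hsplit : ∫ a, φ a ∂P
      = (∫ a in Sp, φ a ∂P) + (∫ a in Sm, φ a ∂P) + ∫ a in (Sp ∪ Sm)ᶜ, φ a ∂P := by
    rw [← setIntegral_union hdisj (measurableSet_minus ε) hint.integrableOn hint.integrableOn]
    rw [integral_add_compl ((measurableSet_plus ε).union (measurableSet_minus ε)) hint]
  have hm : (P Sp).toReal = (1 - q) / 2 := scenery_plus_toReal t ε hε0 hε1
  have hmm : (P Sm).toReal = (1 - q) / 2 := scenery_minus_toReal t ε hε0 hε1
  have hmid : (P ((Sp ∪ Sm)ᶜ)).toReal = q := scenery_mid_toReal t ε hε0 hε1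
  have hSpv : ∫ a in Sp, φ a ∂P
      = (∫ a in Sp, (φ a - φ1) ∂P) + φ1 * ((1 - q) / 2) := by
    rw [integral_sub hint.integrableOn (integrable_const φ1).integrableOn,
      setIntegral_const, measureReal_def, hm]
    ring_nf
  have hSmv : ∫ a in Sm, φ a ∂P
      = (∫ a in Sm, (φ a - φm1) ∂P) + φm1 * ((1 - q) / 2) := by
    rw [integral_sub hint.integrableOn (integrable_const φm1).integrableOn,
      setIntegral_const, measureReal_def, hmm]
    ring_nf
  have hbp : |∫ a in Sp, (φ a - φ1) ∂P| ≤ δ * ((1 - q) / 2) := by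
    rw [← Real.norm_eq_abs, ← hm]
    apply norm_setIntegral_le_of_norm_le_const (measure_lt_top _ _)
    · intro a ha
      rw [Real.norm_eq_abs]
      exact hosc1 a ha
  have hbm : |∫ a in Sm, (φ a - φm1) ∂P| ≤ δ * ((1 - q) / 2) := by
    rw [← Real.norm_eq_abs, ← hmm]
    apply norm_setIntegral_le_of_norm_le_const (measure_lt_top _ _)
    · intro a ha
      rw [Real.norm_eq_abs]
      exact hosc2 a ha
  have hbmid : |∫ a in (Sp ∪ Sm)ᶜ, φ a ∂P| ≤ ‖φ‖ * q := by
    rw [← Real.norm_eq_abs, ← hmid]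
    apply norm_setIntegral_le_of_norm_le_const (measure_lt_top _ _)
    · intro a _
      exact φ.norm_coe_le_norm a
  have heq : (∫ a, φ a ∂P) - (φm1 + φ1) / 2
      = (∫ a in Sp, (φ a - φ1) ∂P) + (∫ a in Sm, (φ a - φm1) ∂P)
        + (∫ a in (Sp ∪ Sm)ᶜ, φ a ∂P) - (φ1 + φm1) * (q / 2) := by
    rw [hsplit, hSpv, hSmv]; ring
  rw [heq]
  have habs1 : |(∫ a in Sp, (φ a - φ1) ∂P) + (∫ a in Sm, (φ a - φm1) ∂P)
        + (∫ a in (Sp ∪ Sm)ᶜ, φ a ∂P) - (φ1 + φm1) * (q / 2)|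
      ≤ |∫ a in Sp, (φ a - φ1) ∂P| + |∫ a in Sm, (φ a - φm1) ∂P|
        + |∫ a in (Sp ∪ Sm)ᶜ, φ a ∂P| + |φ1 + φm1| * (q / 2) := by
    have h1 : |(φ1 + φm1) * (q / 2)| = |φ1 + φm1| * (q / 2) := by
      rw [abs_mul, abs_of_nonneg (by linarith : (0:ℝ) ≤ q / 2)]
    calc _ ≤ |(∫ a in Sp, (φ a - φ1) ∂P) + (∫ a in Sm, (φ a - φm1) ∂P)
        + (∫ a in (Sp ∪ Sm)ᶜ, φ a ∂P)| + |(φ1 + φm1) * (q / 2)| := abs_sub _ _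
      _ ≤ _ := by
          rw [h1]
          have := abs_add_le ((∫ a in Sp, (φ a - φ1) ∂P) + (∫ a in Sm, (φ a - φm1) ∂P))
            (∫ a in (Sp ∪ Sm)ᶜ, φ a ∂P)
          have h2 := abs_add_le (∫ a in Sp, (φ a - φ1) ∂P) (∫ a in Sm, (φ a - φm1) ∂P)
          linarith
  have hsum : |φ1 + φm1| ≤ 2 * ‖φ‖ := by
    calc |φ1 + φm1| ≤ |φ1| + |φm1| := abs_add_le _ _
      _ ≤ 2 * ‖φ‖ := by linarith
  calc |(∫ a in Sp, (φ a - φ1) ∂P) + (∫ a in Sm, (φ a - φm1) ∂P)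
        + (∫ a in (Sp ∪ Sm)ᶜ, φ a ∂P) - (φ1 + φm1) * (q / 2)|
      ≤ |∫ a in Sp, (φ a - φ1) ∂P| + |∫ a in Sm, (φ a - φm1) ∂P|
        + |∫ a in (Sp ∪ Sm)ᶜ, φ a ∂P| + |φ1 + φm1| * (q / 2) := habs1
    _ ≤ δ * ((1 - q) / 2) + δ * ((1 - q) / 2) + ‖φ‖ * q + (2 * ‖φ‖) * (q / 2) := by
        have : |φ1 + φm1| * (q / 2) ≤ (2 * ‖φ‖) * (q / 2) :=
          mul_le_mul_of_nonneg_right hsum (by linarith)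
        linarith
    _ ≤ δ + 2 * ‖φ‖ * q := by nlinarith

theorem main_limit (φ : C(I01, ℝ)) :
    Tendsto (fun t : ℝ => ∫ a, φ a ∂(sceneryMeasure mu0 0 t))
      atTop (𝓝 ((φ ⟨-1, by norm_num⟩ + φ ⟨1, by norm_num⟩) / 2)) := by
  rw [Metric.tendsto_atTop]
  intro θ hθ
  have hφ0 : (0:ℝ) ≤ ‖φ‖ := norm_nonneg φ
  have hu : UniformContinuous φ := CompactSpace.uniformContinuous_of_continuous φ.continuous
  obtain ⟨d, hd0, hball⟩ := Metric.uniformContinuous_iff.mp hu (θ / 4) (by linarith)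
  set ε := min (d / 2) (1 / 2) with hε
  have hε0 : 0 < ε := lt_min (by linarith) (by norm_num)
  have hε1 : ε < 1 := lt_of_le_of_lt (min_le_right _ _) (by norm_num)
  have hεd : ε < d := lt_of_le_of_lt (min_le_left _ _) (by linarith)
  have hosc1 : ∀ a : I01, 1 - ε ≤ (a : ℝ) → |φ a - φ ⟨1, by norm_num⟩| ≤ θ / 4 := by
    intro a ha
    have hle : (a : ℝ) ≤ 1 := a.2.2
    have hdist : dist a (⟨1, by norm_num⟩ : I01) < d := by
      rw [Subtype.dist_eq, Real.dist_eq]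
      have : |(a : ℝ) - 1| = 1 - (a : ℝ) := by
        rw [abs_of_nonpos (by linarith)]; ring
      rw [this]; linarith
    have := hball hdist
    rw [Real.dist_eq] at this
    exact this.le
  have hosc2 : ∀ a : I01, (a : ℝ) ≤ -(1 - ε) → |φ a - φ ⟨-1, by norm_num⟩| ≤ θ / 4 := by
    intro a ha
    have hle : -1 ≤ (a : ℝ) := a.2.1
    have hdist : dist a (⟨-1, by norm_num⟩ : I01) < d := by
      rw [Subtype.dist_eq, Real.dist_eq]
      have : |(a : ℝ) - (-1)| = (a : ℝ) + 1 := by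
        rw [abs_of_nonneg (by linarith)]; ring
      rw [this]; linarith
    have := hball hdist
    rw [Real.dist_eq] at this
    exact this.le
  have h1ε : 0 < 1 - ε := by linarith
  have hc : 1 - (1 - ε)⁻¹ < 0 := by
    have hinv : 0 < (1 - ε)⁻¹ := inv_pos.2 h1ε
    have hmul : (1 - ε) * (1 - ε)⁻¹ = 1 := mul_inv_cancel₀ h1ε.ne'
    nlinarith
  have hQ : Tendsto (fun t : ℝ => Real.exp (Real.exp t * (1 - (1 - ε)⁻¹))) atTop (𝓝 0) := by
    apply Real.tendsto_exp_atBot.comp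
    exact Tendsto.atTop_mul_const_of_neg hc Real.tendsto_exp_atTop
  set B := θ / (2 * (2 * ‖φ‖ + 1)) with hB
  have hB0 : 0 < B := by positivity
  obtain ⟨N, hN⟩ := eventually_atTop.mp (hQ.eventually_lt_const hB0)
  refine ⟨N, fun t ht => ?_⟩
  rw [Real.dist_eq]
  have hkb := key_bound φ ε (θ / 4) hε0 hε1 (by linarith) hosc1 hosc2 t
  set q := Hfn (Real.exp (-t) * (1 - ε)) / Hfn (Real.exp (-t)) with hq
  have hq0 : 0 ≤ q := q_nonneg t ε
  have hqB : q < B := by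
    rw [hq, q_eq t ε hε1]
    exact hN t ht
  have h2 : 2 * ‖φ‖ * q < θ / 2 := by
    have h3 : 2 * ‖φ‖ * q ≤ (2 * ‖φ‖ + 1) * q := by nlinarith
    have h4 : (2 * ‖φ‖ + 1) * q < (2 * ‖φ‖ + 1) * B :=
      mul_lt_mul_of_pos_left hqB (by linarith)
    have h5 : (2 * ‖φ‖ + 1) * B = θ / 2 := by
      rw [hB]; field_simp
    linarith
  calc |(∫ a, φ a ∂(sceneryMeasure mu0 0 t))
        - (φ ⟨-1, by norm_num⟩ + φ ⟨1, by norm_num⟩) / 2|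
      ≤ θ / 4 + 2 * ‖φ‖ * q := hkb
    _ < θ := by linarith

lemma memsupp_zero : MemSupp mu0 0 := by
  intro ε hε
  have h1 : mu0 (Ioc (ε / 2) (3 * ε / 4)) = ENNReal.ofReal (Hfn (3 * ε / 4) - Hfn (ε / 2)) :=
    mu0_Ioc (by linarith) (by linarith)
  have h2 : 0 < Hfn (3 * ε / 4) - Hfn (ε / 2) :=
    sub_pos.2 (Hfn_strictMono (by linarith) (by linarith))
  have h3 : 0 < mu0 (Ioc (ε / 2) (3 * ε / 4)) := by
    rw [h1]; exact ENNReal.ofReal_pos.2 h2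
  refine lt_of_lt_of_le h3 (measure_mono ?_)
  rintro x ⟨hx1, hx2⟩
  exact ⟨by linarith, by linarith⟩

end SceneryAux

/-- Example 3, first part: for `μ` with density `x⁻²e^{-1/|x|}` one has
`0 ∈ supp μ` and `μ_{0,t} → (1/2)(δ_{-1} + δ_1)` weak-* as `t → ∞`. -/
theorem scenery_tendsto_half_boundary :
    MemSupp (volume.withDensity gdens) 0 ∧
    ∀ φ : C(I01, ℝ),
      Tendsto (fun t : ℝ => ∫ a, φ a ∂(scenery (volume.withDensity gdens) 0 t : Measure I01))
        atTop (𝓝 ((φ ⟨-1, by norm_num⟩ + φ ⟨1, by norm_num⟩) / 2)) := by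
  constructor
  · exact SceneryAux.memsupp_zero
  · intro φ
    have h : (fun t : ℝ => ∫ a, φ a ∂(scenery (volume.withDensity gdens) 0 t : Measure I01))
        = fun t : ℝ => ∫ a, φ a ∂(sceneryMeasure SceneryAux.mu0 0 t) := by
      funext t
      rw [SceneryAux.scenery_coe t]
    rw [h]
    exact SceneryAux.main_limit φ
end
end

section
/- Let μ be the measure on ℝ with μ((−∞,0]) = 0 and μ([0,x]) = e^{−1/x} for all x > 0. Then for every orientation-preserving C¹ diffeomorphism f : ℝ → ℝ, lim_{t→∞} (fμ)_{f(0),t} = δ_1 in the weak-* topology. In particular, for every such f, with s = log f'(0), the sceneries μ_{0,t} and (fμ)_{f(0),t−s} are asymptotic. -/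
open MeasureTheory Filter Topology Set
open scoped ENNReal NNReal

noncomputable section

-- helper 1: measurable embedding
lemma hemb (x r : ℝ) (hr : r ≠ 0) : MeasurableEmbedding (fun a : I01 => x + r * (a : ℝ)) := by
  have h1 : MeasurableEmbedding (Subtype.val : I01 → ℝ) :=
    MeasurableEmbedding.subtype_coe measurableSet_Icc
  have h2 : MeasurableEmbedding (fun y : ℝ => x + r * y) :=
    ((Homeomorph.mulLeft₀ r hr).trans (Homeomorph.addLeft x)).measurableEmbedding
  exact h2.comp h1

-- helper 2: image computation
lemma image_h (x r s : ℝ) (hr : 0 < r) (hs1 : -1 ≤ s) (hs2 : s ≤ 1) :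
    (fun a : I01 => x + r * (a : ℝ)) '' {a : I01 | (a : ℝ) ≤ s}
      = Set.Icc (x - r) (x + s * r) := by
  ext y
  constructor
  · rintro ⟨a, ha, rfl⟩
    have h1 := a.2.1
    have ha' : (a : ℝ) ≤ s := ha
    dsimp only
    constructor <;> nlinarith
  · rintro ⟨hy1, hy2⟩
    have hm1 : -1 ≤ (y - x) / r := by rw [le_div_iff₀ hr]; linarith
    have hm2 : (y - x) / r ≤ s := by rw [div_le_iff₀ hr]; nlinarith
    refine ⟨⟨(y - x) / r, hm1, hm2.trans hs2⟩, hm2, ?_⟩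
    field_simp
    ring

-- helper 3: interval measure from h1 h2
lemma mu_Icc (μ : Measure ℝ) (h1 : μ (Set.Iic (0 : ℝ)) = 0)
    (h2 : ∀ x : ℝ, 0 < x → μ (Set.Icc (0 : ℝ) x) = ENNReal.ofReal (Real.exp (-(1 / x))))
    {u v : ℝ} (hu : u ≤ 0) (hv : 0 < v) :
    μ (Set.Icc u v) = ENNReal.ofReal (Real.exp (-(1 / v))) := by
  have hz : μ ({0} : Set ℝ) = 0 := measure_mono_null (by simp) h1
  have hIoc : μ (Set.Ioc 0 v) = ENNReal.ofReal (Real.exp (-(1 / v))) := by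
    have hle : μ (Set.Icc 0 v) ≤ μ (Set.Ioc 0 v) := by
      have hcup : Set.Icc (0 : ℝ) v ⊆ {0} ∪ Set.Ioc 0 v := by
        intro a ⟨ha1, ha2⟩
        rcases eq_or_lt_of_le ha1 with h | h
        · exact Or.inl (by simp [← h])
        · exact Or.inr ⟨h, ha2⟩
      calc μ (Set.Icc 0 v) ≤ μ ({0} ∪ Set.Ioc 0 v) := measure_mono hcup
        _ ≤ μ {0} + μ (Set.Ioc 0 v) := measure_union_le _ _
        _ = μ (Set.Ioc 0 v) := by rw [hz, zero_add]
    have := le_antisymm (measure_mono Set.Ioc_subset_Icc_self) hle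
    rw [this, h2 v hv]
  have hsplit : Set.Icc u v = Set.Icc u 0 ∪ Set.Ioc 0 v :=
    (Set.Icc_union_Ioc_eq_Icc hu hv.le).symm
  have hdisj : Disjoint (Set.Icc u 0) (Set.Ioc 0 v) := by
    rw [Set.disjoint_left]
    rintro a ⟨_, ha2⟩ ⟨hb1, _⟩
    linarith
  rw [hsplit, measure_union hdisj measurableSet_Ioc,
    measure_mono_null Set.Icc_subset_Iic_self h1, zero_add, hIoc]

-- helper 4: scenery measure of sublevel sets
lemma scenery_sublevel (ν : Measure ℝ) (x : ℝ) (G : ℝ → ℝ)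
    (hν : ∀ u v : ℝ, u ≤ x → x < v → ν (Set.Icc u v) = ENNReal.ofReal (Real.exp (-(1 / G v))))
    (t s : ℝ) (hs0 : 0 < s) (hs1 : s ≤ 1) :
    sceneryMeasure ν x t {a : I01 | (a : ℝ) ≤ s}
      = ENNReal.ofReal (Real.exp (1 / G (x + Real.exp (-t)) - 1 / G (x + s * Real.exp (-t)))) := by
  rw [sceneryMeasure, window]
  obtain ⟨r, hrp, hrdef⟩ : ∃ r, 0 < r ∧ Real.exp (-t) = r := ⟨_, Real.exp_pos _, rfl⟩
  rw [hrdef, one_mul]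
  have hE := hemb x r hrp.ne'
  have himg := image_h x r s hrp (by linarith) hs1
  rw [Measure.smul_apply, hE.comap_apply, himg,
    hν _ _ (by linarith) (by nlinarith), hν _ _ (by linarith) (by nlinarith),
    smul_eq_mul, ← ENNReal.div_eq_inv_mul]
  have hexp : Real.exp (1 / G (x + r) - 1 / G (x + s * r))
      = Real.exp (-(1 / G (x + s * r))) / Real.exp (-(1 / G (x + r))) := by
    rw [← Real.exp_sub]; ring_nf
  rw [hexp, ENNReal.ofReal_div_of_pos (Real.exp_pos _)]

-- helper 5: scenery is a probability measure and coercion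
lemma scenery_coe (ν : Measure ℝ) (x : ℝ) (G : ℝ → ℝ)
    (hν : ∀ u v : ℝ, u ≤ x → x < v → ν (Set.Icc u v) = ENNReal.ofReal (Real.exp (-(1 / G v))))
    (t : ℝ) : (scenery ν x t : Measure I01) = sceneryMeasure ν x t := by
  have hprob : IsProbabilityMeasure (sceneryMeasure ν x t) := by
    constructor
    have huniv : (Set.univ : Set I01) = {a : I01 | (a : ℝ) ≤ 1} := by
      ext a; simpa using a.2.2
    rw [huniv, scenery_sublevel ν x G hν t 1 one_pos le_rfl]
    simp
  have hsc : scenery ν x t = ⟨sceneryMeasure ν x t, hprob⟩ := dif_pos hprob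
  exact congrArg Subtype.val hsc

-- helper 6: the exponent goes to -infinity
lemma exponent_atBot (x : ℝ) (G : ℝ → ℝ) (c : ℝ) (hc : 0 < c)
    (hG : HasDerivAt G c x) (hGx : G x = 0) (hGmono : StrictMono G)
    (s : ℝ) (hs0 : 0 < s) (hs1 : s < 1) :
    Tendsto (fun t : ℝ => 1 / G (x + Real.exp (-t)) - 1 / G (x + s * Real.exp (-t)))
      atTop atBot := by
  have hslope := hasDerivAt_iff_tendsto_slope.1 hG
  have hcomp : ∀ b : ℝ, 0 < b →
      Tendsto (fun t : ℝ => G (x + b * Real.exp (-t)) / (b * Real.exp (-t))) atTop (𝓝 c) := by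
    intro b hb
    have h0 : Tendsto (fun t : ℝ => b * Real.exp (-t)) atTop (𝓝 0) := by
      simpa using (Real.tendsto_exp_neg_atTop_nhds_zero.const_mul b)
    have h1 : Tendsto (fun t : ℝ => x + b * Real.exp (-t)) atTop (𝓝[≠] x) := by
      apply tendsto_nhdsWithin_of_tendsto_nhds_of_eventually_within
      · simpa using tendsto_const_nhds.add h0
      · filter_upwards with t
        have hpos := mul_pos hb (Real.exp_pos (-t))
        simp only [Set.mem_compl_iff, Set.mem_singleton_iff]
        intro h
        nlinarith
    have h2 := hslope.comp h1
    refine h2.congr fun t => ?_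
    simp only [Function.comp_apply, slope_def_field, hGx]
    ring
  have hI : ∀ b : ℝ, 0 < b →
      Tendsto (fun t : ℝ => (b * Real.exp (-t)) / G (x + b * Real.exp (-t))) atTop (𝓝 c⁻¹) := by
    intro b hb
    have h := (hcomp b hb).inv₀ hc.ne'
    refine h.congr fun t => ?_
    rw [inv_div]
  have hGpos : ∀ b : ℝ, 0 < b → ∀ t : ℝ, 0 < G (x + b * Real.exp (-t)) := by
    intro b hb t
    have hx : x < x + b * Real.exp (-t) := by nlinarith [mul_pos hb (Real.exp_pos (-t))]
    have := hGmono hx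
    rwa [hGx] at this
  have hbracket : Tendsto (fun t : ℝ =>
      (1 * Real.exp (-t)) / G (x + 1 * Real.exp (-t))
        - s⁻¹ * ((s * Real.exp (-t)) / G (x + s * Real.exp (-t)))) atTop
      (𝓝 (c⁻¹ - s⁻¹ * c⁻¹)) :=
    (hI 1 one_pos).sub ((hI s hs0).const_mul s⁻¹)
  have hneg : c⁻¹ - s⁻¹ * c⁻¹ < 0 := by
    have h1 : (1 : ℝ) < s⁻¹ := (one_lt_inv₀ hs0).2 hs1
    have h2 : 0 < c⁻¹ := inv_pos.2 hc
    nlinarith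
  have hmain := Tendsto.atTop_mul_neg hneg Real.tendsto_exp_atTop hbracket
  refine hmain.congr fun t => ?_
  have hg1 := hGpos 1 one_pos t
  have hg2 := hGpos s hs0 t
  have he : Real.exp (-t) = (Real.exp t)⁻¹ := Real.exp_neg t
  rw [he] at hg1 hg2 ⊢
  simp only [one_mul] at hg1 ⊢
  generalize hA : G (x + (Real.exp t)⁻¹) = A at hg1 ⊢
  generalize hB : G (x + s * (Real.exp t)⁻¹) = B at hg2 ⊢
  have h1 : A ≠ 0 := hg1.ne'
  have h2 : B ≠ 0 := hg2.ne'
  field_simp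

-- helper 7: main convergence lemma
lemma scenery_tendsto_dirac (ν : Measure ℝ) (x : ℝ) (G : ℝ → ℝ) (c : ℝ) (hc : 0 < c)
    (hG : HasDerivAt G c x) (hGx : G x = 0) (hGmono : StrictMono G)
    (hν : ∀ u v : ℝ, u ≤ x → x < v → ν (Set.Icc u v) = ENNReal.ofReal (Real.exp (-(1 / G v))))
    (φ : C(I01, ℝ)) :
    Tendsto (fun t : ℝ => ∫ a, φ a ∂(scenery ν x t : Measure I01))
      atTop (𝓝 (φ ⟨1, by norm_num⟩)) := by
  set p1 : I01 := ⟨1, by norm_num⟩ with hp1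
  -- measure of sublevel sets tends to 0
  have hlimS : ∀ s : ℝ, 0 < s → s < 1 →
      Tendsto (fun t : ℝ => ((scenery ν x t : Measure I01) {a : I01 | (a : ℝ) ≤ s}).toReal)
        atTop (𝓝 0) := by
    intro s hs0 hs1
    have heq : ∀ t : ℝ, ((scenery ν x t : Measure I01) {a : I01 | (a : ℝ) ≤ s}).toReal
        = Real.exp (1 / G (x + Real.exp (-t)) - 1 / G (x + s * Real.exp (-t))) := by
      intro t
      rw [scenery_coe ν x G hν t, scenery_sublevel ν x G hν t s hs0 hs1.le,
        ENNReal.toReal_ofReal (Real.exp_nonneg _)]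
    have := Real.tendsto_exp_atBot.comp (exponent_atBot x G c hc hG hGx hGmono s hs0 hs1)
    exact this.congr fun t => (heq t).symm
  rw [Metric.tendsto_nhds]
  intro ε hε
  -- continuity of φ at p1
  obtain ⟨δ, hδ, hδ'⟩ := Metric.continuousAt_iff.1 (φ.continuous.continuousAt (x := p1)) (ε / 2)
    (by linarith)
  set s : ℝ := max (1 - δ / 2) (1 / 2) with hsdef
  have hs0 : 0 < s := lt_of_lt_of_le (by norm_num) (le_max_right _ _)
  have hs1 : s < 1 := by
    apply max_lt (by linarith) (by norm_num)
  -- pointwise bound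
  set S : Set I01 := {a : I01 | (a : ℝ) ≤ s} with hSdef
  have hSmeas : MeasurableSet S := measurable_subtype_coe measurableSet_Iic
  have hptwise : ∀ a : I01, ‖φ a - φ p1‖ ≤ ε / 2 + S.indicator (fun _ => 2 * ‖φ‖) a := by
    intro a
    by_cases ha : a ∈ S
    · rw [Set.indicator_of_mem ha]
      have h1 : ‖φ a‖ ≤ ‖φ‖ := φ.norm_coe_le_norm a
      have h2 : ‖φ p1‖ ≤ ‖φ‖ := φ.norm_coe_le_norm p1
      have := norm_sub_le (φ a) (φ p1)
      linarith
    · rw [Set.indicator_of_notMem ha, add_zero]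
      have ha' : s < (a : ℝ) := lt_of_not_ge ha
      have hdist : dist a p1 < δ := by
        rw [Subtype.dist_eq, Real.dist_eq]
        have h1 : (a : ℝ) ≤ 1 := a.2.2
        have h2 : 1 - δ / 2 ≤ s := le_max_left _ _
        have hp1v : (p1 : ℝ) = 1 := rfl
        rw [hp1v]
        rw [abs_sub_comm, abs_of_nonneg (by linarith)]
        linarith
      have := hδ' hdist
      rw [dist_eq_norm] at this
      linarith
  -- eventually small
  have hev : ∀ᶠ t : ℝ in atTop,
      ((scenery ν x t : Measure I01) S).toReal * (2 * ‖φ‖) < ε / 2 := by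
    have htend : Tendsto (fun t : ℝ => ((scenery ν x t : Measure I01) S).toReal * (2 * ‖φ‖))
        atTop (𝓝 0) := by
      simpa using (hlimS s hs0 hs1).mul_const (2 * ‖φ‖)
    exact htend.eventually_lt_const (by linarith)
  filter_upwards [hev] with t ht
  -- integral estimate at time t
  set σ : Measure I01 := (scenery ν x t : Measure I01) with hσdef
  have : IsProbabilityMeasure σ := (scenery ν x t).2
  have hφint : Integrable (fun a : I01 => φ a) σ :=
    ⟨φ.continuous.aestronglyMeasurable, HasFiniteIntegral.of_bounded
      (C := ‖φ‖) (Filter.Eventually.of_forall fun a => φ.norm_coe_le_norm a)⟩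
  have hsubint : Integrable (fun a : I01 => φ a - φ p1) σ := hφint.sub (integrable_const _)
  have hbint : Integrable (fun a : I01 => ε / 2 + S.indicator (fun _ => 2 * ‖φ‖) a) σ :=
    (integrable_const _).add ((integrable_const _).indicator hSmeas)
  have hstep1 : dist (∫ a, φ a ∂σ) (φ p1) ≤ ∫ a, ‖φ a - φ p1‖ ∂σ := by
    rw [dist_eq_norm]
    have : (∫ a, φ a ∂σ) - φ p1 = ∫ a, (φ a - φ p1) ∂σ := by
      rw [integral_sub hφint (integrable_const _), integral_const, probReal_univ, one_smul]
    rw [this]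
    exact norm_integral_le_integral_norm _
  have hstep2 : ∫ a, ‖φ a - φ p1‖ ∂σ
      ≤ ∫ a, (ε / 2 + S.indicator (fun _ => 2 * ‖φ‖) a) ∂σ :=
    integral_mono hsubint.norm hbint hptwise
  have hstep3 : ∫ a, (ε / 2 + S.indicator (fun _ => 2 * ‖φ‖) a) ∂σ
      = ε / 2 + (σ S).toReal * (2 * ‖φ‖) := by
    rw [integral_add (integrable_const _) ((integrable_const _).indicator hSmeas),
      integral_const, probReal_univ, one_smul,
      integral_indicator_const _ hSmeas, smul_eq_mul, Measure.real]
  calc dist (∫ a, φ a ∂σ) (φ p1) ≤ ε / 2 + (σ S).toReal * (2 * ‖φ‖) := by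
        rw [← hstep3]; exact hstep1.trans hstep2
    _ < ε / 2 + ε / 2 := by exact add_lt_add_right ht _
    _ = ε := by ring

/-- Example 4: let `μ` be the measure with `μ((-∞,0]) = 0` and
`μ([0,x]) = e^{-1/x}` for `x > 0`.  Then for every orientation-preserving `C¹`
diffeomorphism `f`, `(fμ)_{f(0),t} → δ_1` weak-*; in particular, with
`s = log f'(0)`, the sceneries `μ_{0,t}` and `(fμ)_{f(0),t-s}` are asymptotic. -/
theorem scenery_pushforward_tendsto_dirac_one (μ : Measure ℝ)
    (h1 : μ (Set.Iic (0 : ℝ)) = 0)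
    (h2 : ∀ x : ℝ, 0 < x → μ (Set.Icc (0 : ℝ) x) = ENNReal.ofReal (Real.exp (-(1 / x))))
    (f : ℝ → ℝ) (hf : IsOPDiffeo f) :
    (∀ φ : C(I01, ℝ),
      Tendsto (fun t : ℝ => ∫ a, φ a ∂(scenery (Measure.map f μ) (f 0) t : Measure I01))
        atTop (𝓝 (φ ⟨1, by norm_num⟩))) ∧
    (∀ φ : C(I01, ℝ),
      Tendsto (fun t : ℝ =>
          (∫ a, φ a ∂(scenery μ 0 t : Measure I01)) -
            ∫ a, φ a ∂(scenery (Measure.map f μ) (f 0)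
              (t - Real.log (deriv f 0)) : Measure I01))
        atTop (𝓝 0)) := by
  obtain ⟨hC1, hbij, hpos⟩ := hf
  have hmono : StrictMono f := strictMono_of_deriv_pos hpos
  set e : ℝ ≃o ℝ := StrictMono.orderIsoOfSurjective f hmono hbij.2 with hedef
  have hecoe : ∀ y, e y = f y := fun y => by
    rw [hedef, StrictMono.coe_orderIsoOfSurjective]
  set G : ℝ → ℝ := fun y => e.symm y with hGdef
  have hG0 : G (f 0) = 0 := by
    rw [hGdef]
    simp only
    rw [← hecoe 0]
    exact e.symm_apply_apply 0
  have hGmono : StrictMono G := e.symm.strictMono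
  have hder : HasDerivAt f (deriv f 0) 0 := ((hC1.differentiable one_ne_zero) 0).hasDerivAt
  have hc : 0 < (deriv f 0)⁻¹ := inv_pos.2 (hpos 0)
  have hGder : HasDerivAt G (deriv f 0)⁻¹ (f 0) := by
    refine HasDerivAt.of_local_left_inverse (f := f) ((OrderIso.continuous e.symm).continuousAt)
      ?_ (hpos 0).ne' ?_
    · rw [hG0]; exact hder
    · exact Filter.Eventually.of_forall fun y =>
        (hecoe (e.symm y)).symm.trans (e.apply_symm_apply y)
  have hmeasf : Measurable f := hC1.continuous.measurable
  have hν : ∀ u v : ℝ, u ≤ f 0 → f 0 < v →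
      (Measure.map f μ) (Set.Icc u v) = ENNReal.ofReal (Real.exp (-(1 / G v))) := by
    intro u v hu hv
    rw [Measure.map_apply hmeasf measurableSet_Icc]
    have hpre : f ⁻¹' Set.Icc u v = Set.Icc (G u) (G v) := by
      ext y
      simp only [Set.mem_preimage, Set.mem_Icc]
      constructor
      · rintro ⟨hy1, hy2⟩
        exact ⟨(e.symm_apply_le).2 (by rw [hecoe]; exact hy1),
          (e.le_symm_apply).2 (by rw [hecoe]; exact hy2)⟩
      · rintro ⟨hy1, hy2⟩
        constructor
        · have := (e.symm_apply_le).1 hy1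
          rwa [hecoe] at this
        · have := (e.le_symm_apply).1 hy2
          rwa [hecoe] at this
    rw [hpre]
    apply mu_Icc μ h1 h2
    · have := hGmono.monotone hu
      rwa [hG0] at this
    · have := hGmono hv
      rwa [hG0] at this
  have part1 : ∀ φ : C(I01, ℝ),
      Tendsto (fun t : ℝ => ∫ a, φ a ∂(scenery (Measure.map f μ) (f 0) t : Measure I01))
        atTop (𝓝 (φ ⟨1, by norm_num⟩)) := fun φ =>
    scenery_tendsto_dirac (Measure.map f μ) (f 0) G _ hc hGder hG0 hGmono hν φ
  refine ⟨part1, ?_⟩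
  intro φ
  have hνμ : ∀ u v : ℝ, u ≤ 0 → 0 < v →
      μ (Set.Icc u v) = ENNReal.ofReal (Real.exp (-(1 / id v))) :=
    fun u v hu hv => mu_Icc μ h1 h2 hu hv
  have hA := scenery_tendsto_dirac μ 0 id 1 one_pos (hasDerivAt_id 0) rfl strictMono_id hνμ φ
  have hshift : Tendsto (fun t : ℝ => t - Real.log (deriv f 0)) atTop atTop := by
    simpa [sub_eq_add_neg] using
      tendsto_atTop_add_const_right atTop (-(Real.log (deriv f 0))) tendsto_id
  have hB := (part1 φ).comp hshift
  simpa using hA.sub hB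
end
end
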